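/- arXiv:1602.04351 — 5 statements merged into one kernel-verified Lean document; each statement's English description precedes it below -/
import Mathlib

section
/- If a and b are positive integers with a - 1 < b, then b^b · a^a < (b+1)^(b+1) · (a-1)^(a-1), where 0^0 is interpreted as 1. -/
/-- Bernoulli-style bound: `(M+1)^n * (M - n) ≤ M^(n+1)` for `n ≤ M`. -/
lemma lemA : ∀ n M : ℕ, n ≤ M → (M + 1) ^ n * (M - n) ≤ M ^ (n + 1) := by
  intro n
  induction n with
  | zero => intro M _; simp
  | succ k ih =>
    intro M hM
    have hk : k ≤ M := Nat.le_of_succ_le hM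
    have h1 : (M + 1) * (M - (k + 1)) ≤ M * (M - k) := by
      obtain ⟨t, rfl⟩ : ∃ t, M = k + 1 + t := ⟨M - (k + 1), by omega⟩
      have e1 : k + 1 + t - (k + 1) = t := by omega
      have e2 : k + 1 + t - k = t + 1 := by omega
      rw [e1, e2]
      nlinarith
    calc (M + 1) ^ (k + 1) * (M - (k + 1))
        = (M + 1) ^ k * ((M + 1) * (M - (k + 1))) := by ring
      _ ≤ (M + 1) ^ k * (M * (M - k)) := Nat.mul_le_mul_left _ h1
      _ = M * ((M + 1) ^ k * (M - k)) := by ring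
      _ ≤ M * M ^ (k + 1) := Nat.mul_le_mul_left _ (ih M hk)
      _ = M ^ (k + 2) := by ring

/-- Step: `(n+1)^(n+1) * (n+1)^(n+1) < (n+2)^(n+2) * n^n`. -/
lemma lemStep (n : ℕ) : (n + 1) ^ (n + 1) * (n + 1) ^ (n + 1) < (n + 2) ^ (n + 2) * n ^ n := by
  rcases Nat.eq_zero_or_pos n with rfl | hn
  · norm_num
  obtain ⟨M, hMdef⟩ : ∃ M : ℕ, M = n ^ 2 + 2 * n := ⟨_, rfl⟩
  have hnM : n ≤ M := by nlinarith
  have hA := lemA n M hnM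
  have hMn : M - n = n ^ 2 + n := by omega
  rw [hMn] at hA
  have hpos : 0 < n ^ 2 + n := by positivity
  have hMpos : 0 < M := by omega
  -- (M+1)*M < (n+2)^2 * (n^2+n)
  have hq : (M + 1) * M < (n + 2) ^ 2 * (n ^ 2 + n) := by
    subst hMdef
    nlinarith [mul_pos (mul_pos hn hn) hn, mul_pos hn hn]
  have key : (M + 1) ^ (n + 1) * (n ^ 2 + n) < (n + 2) ^ 2 * M ^ n * (n ^ 2 + n) := by
    calc (M + 1) ^ (n + 1) * (n ^ 2 + n)
        = (M + 1) * ((M + 1) ^ n * (n ^ 2 + n)) := by ring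
      _ ≤ (M + 1) * M ^ (n + 1) := Nat.mul_le_mul_left _ hA
      _ = (M + 1) * M * M ^ n := by ring
      _ < (n + 2) ^ 2 * (n ^ 2 + n) * M ^ n :=
          Nat.mul_lt_mul_of_lt_of_le hq le_rfl (pow_pos hMpos n)
      _ = (n + 2) ^ 2 * M ^ n * (n ^ 2 + n) := by ring
  have key2 : (M + 1) ^ (n + 1) < (n + 2) ^ 2 * M ^ n :=
    lt_of_mul_lt_mul_right key (le_of_lt hpos)
  have e1 : (n + 1) ^ (n + 1) * (n + 1) ^ (n + 1) = (M + 1) ^ (n + 1) := by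
    rw [← mul_pow]; congr 1; subst hMdef; ring
  have e2 : (n + 2) ^ (n + 2) * n ^ n = (n + 2) ^ 2 * M ^ n := by
    subst hMdef
    have h3 : (n ^ 2 + 2 * n) ^ n = (n + 2) ^ n * n ^ n := by
      rw [← mul_pow]; congr 1; ring
    rw [h3]; ring
  rw [e1, e2]
  exact key2

/-- Chain: for `m < n`, `n^n * (m+1)^(m+1) < (n+1)^(n+1) * m^m`. -/
lemma lemChain (m n : ℕ) (h : m < n) :
    n ^ n * (m + 1) ^ (m + 1) < (n + 1) ^ (n + 1) * m ^ m := by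
  induction n, h using Nat.le_induction with
  | base => exact lemStep m
  | succ k hk ih =>
    have hpos : 0 < (k + 1) ^ (k + 1) := by positivity
    have h1 : (k + 1) ^ (k + 1) * ((k + 1) ^ (k + 1) * (m + 1) ^ (m + 1))
        < (k + 1) ^ (k + 1) * ((k + 2) ^ (k + 2) * m ^ m) := by
      calc (k + 1) ^ (k + 1) * ((k + 1) ^ (k + 1) * (m + 1) ^ (m + 1))
          = (k + 1) ^ (k + 1) * (k + 1) ^ (k + 1) * (m + 1) ^ (m + 1) := by ring
        _ < (k + 2) ^ (k + 2) * k ^ k * (m + 1) ^ (m + 1) :=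
            Nat.mul_lt_mul_of_lt_of_le (lemStep k) le_rfl (by positivity)
        _ = (k + 2) ^ (k + 2) * (k ^ k * (m + 1) ^ (m + 1)) := by ring
        _ ≤ (k + 2) ^ (k + 2) * ((k + 1) ^ (k + 1) * m ^ m) :=
            Nat.mul_le_mul_left _ (le_of_lt ih)
        _ = (k + 1) ^ (k + 1) * ((k + 2) ^ (k + 2) * m ^ m) := by ring
    exact lt_of_mul_lt_mul_left h1 (Nat.zero_le _)

/-- If `a` and `b` are positive integers with `a - 1 < b`, then
`b^b * a^a < (b+1)^(b+1) * (a-1)^(a-1)` (with `0^0 = 1`). -/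
theorem zagreb2_swap (a b : ℕ) (ha : 0 < a) (hb : 0 < b) (h : a - 1 < b) :
    b ^ b * a ^ a < (b + 1) ^ (b + 1) * (a - 1) ^ (a - 1) := by
  have := lemChain (a - 1) b h
  have ha1 : a - 1 + 1 = a := Nat.succ_pred_eq_of_pos ha
  rwa [ha1] at this
end

section
/- If u and v are positive integers with u > s and v ≥ u - s + 1 for a positive integer s, then v^v · u^u < (v+s)^(v+s) · (u-s)^(u-s), where 0^0 = 1. -/
open Real

private lemma pow_eq_exp (x : ℝ) (n : ℕ) (hx : 0 < x) :
    x ^ n = Real.exp (n * Real.log x) := by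
  rw [Real.exp_nat_mul, Real.exp_log hx]

/-- If `u, v, s` are positive integers with `u > s` and `v ≥ u - s + 1`, then
`v^v * u^u < (v+s)^(v+s) * (u-s)^(u-s)` (with `0^0 = 1`). -/
theorem zagreb2_swap_s (u v s : ℕ) (hu : 0 < u) (hv : 0 < v) (hs : 0 < s)
    (hus : s < u) (h : u - s + 1 ≤ v) :
    v ^ v * u ^ u < (v + s) ^ (v + s) * (u - s) ^ (u - s) := by
  set a : ℕ := u - s with ha_def
  have ha : 1 ≤ a := by omega
  have hua : u = a + s := by omega
  have hav : a + 1 ≤ v := by omega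
  -- real versions
  set A : ℝ := (a : ℝ) with hA
  set B : ℝ := (v : ℝ) with hB
  set S : ℝ := (s : ℝ) with hS
  have hA1 : (1 : ℝ) ≤ A := by rw [hA]; exact_mod_cast ha
  have hS0 : (0 : ℝ) < S := by rw [hS]; exact_mod_cast hs
  have hAB : A + 1 ≤ B := by rw [hA, hB]; exact_mod_cast hav
  have hd : (0 : ℝ) < B + S - A := by linarith
  -- weights
  set t : ℝ := S / (B + S - A) with ht_def
  set r : ℝ := (B - A) / (B + S - A) with hr_def
  have ht : 0 < t := div_pos hS0 hd
  have hr : 0 < r := div_pos (by linarith) hd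
  have htr : t + r = 1 := by rw [ht_def, hr_def]; field_simp; ring
  have hmemA : A ∈ Set.Ici (0 : ℝ) := by simp [Set.mem_Ici]; linarith
  have hmemBS : B + S ∈ Set.Ici (0 : ℝ) := by simp [Set.mem_Ici]; linarith
  have hne : A ≠ B + S := by intro hc; rw [hc] at hAB; linarith
  have c1 : r • A + t • (B + S) = A + S := by
    rw [smul_eq_mul, smul_eq_mul, hr_def, ht_def, div_mul_eq_mul_div, div_mul_eq_mul_div,
      ← add_div, div_eq_iff hd.ne']; ring
  have c2 : t • A + r • (B + S) = B := by
    rw [smul_eq_mul, smul_eq_mul, hr_def, ht_def, div_mul_eq_mul_div, div_mul_eq_mul_div,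
      ← add_div, div_eq_iff hd.ne']; ring
  have k1 := Real.strictConvexOn_mul_log.2 hmemA hmemBS hne hr ht (by linarith)
  have k2 := Real.strictConvexOn_mul_log.2 hmemA hmemBS hne ht hr (by linarith)
  rw [c1] at k1
  rw [c2] at k2
  simp only [smul_eq_mul] at k1 k2
  have key : B * Real.log B + (A + S) * Real.log (A + S)
      < A * Real.log A + (B + S) * Real.log (B + S) := by
    have hsum : r * (A * Real.log A) + t * ((B + S) * Real.log (B + S))
        + (t * (A * Real.log A) + r * ((B + S) * Real.log (B + S)))
        = A * Real.log A + (B + S) * Real.log (B + S) := by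
      linear_combination (A * Real.log A + (B + S) * Real.log (B + S)) * htr
    linarith [k1, k2, hsum]
  -- exponentiate
  have hA0 : (0 : ℝ) < A := by linarith
  have hB0 : (0 : ℝ) < B := by linarith
  have hreal : B ^ v * (A + S) ^ u < (B + S) ^ (v + s) * A ^ a := by
    rw [pow_eq_exp _ _ hB0, pow_eq_exp _ _ (by linarith : (0:ℝ) < A + S),
      pow_eq_exp _ _ (by linarith : (0:ℝ) < B + S), pow_eq_exp _ _ hA0,
      ← Real.exp_add, ← Real.exp_add]
    apply Real.exp_lt_exp.2
    have hu' : (u : ℝ) = A + S := by rw [hA, hS]; exact_mod_cast congrArg (Nat.cast : ℕ → ℝ) hua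
    have hvs : ((v + s : ℕ) : ℝ) = B + S := by push_cast; rw [hB, hS]
    rw [hu', hvs, hB]
    push_cast
    nlinarith [key]
  have : ((v : ℝ)) ^ v * ((u : ℝ)) ^ u < ((v + s : ℕ) : ℝ) ^ (v + s) * ((a : ℕ) : ℝ) ^ a := by
    have hu' : (u : ℝ) = A + S := by rw [hA, hS]; exact_mod_cast congrArg (Nat.cast : ℕ → ℝ) hua
    have hvs : ((v + s : ℕ) : ℝ) = B + S := by push_cast; rw [hB, hS]
    rw [hu', hvs]; exact hreal
  exact_mod_cast this
end

section
/- For any tree T on n ≥ 5 vertices, the Narumi–Katayama index ∏_{v ∈ V(T)} d(v) satisfies ∏(S_n) ≤ ∏(T) ≤ ∏(P_n), i.e., n-1 ≤ ∏_{v} d(v) ≤ 2^{n-2}, where S_n is the star and P_n the path on n vertices. -/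
lemma aux_le_two_pow : ∀ a : ℕ, 1 ≤ a → a ≤ 2 ^ (a - 1)
  | 0, h => by omega
  | 1, _ => by norm_num
  | (a+2), _ => by
      have ih := aux_le_two_pow (a+1) (by omega)
      simp only [Nat.add_sub_cancel] at ih
      show a + 2 ≤ 2 ^ (a + 1)
      have : 2 ^ (a+1) = 2 ^ a + 2 ^ a := by ring
      have hp : 1 ≤ 2 ^ a := Nat.one_le_two_pow
      omega

lemma aux_sum_le_prod {ι : Type*} (s : Finset ι) (f : ι → ℕ) (hf : ∀ i ∈ s, 1 ≤ f i) :
    ∑ i ∈ s, (f i - 1) + 1 ≤ ∏ i ∈ s, f i := by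
  classical
  induction s using Finset.induction with
  | empty => simp
  | @insert a s ha ih =>
    rw [Finset.sum_insert ha, Finset.prod_insert ha]
    have h1 : ∑ i ∈ s, (f i - 1) + 1 ≤ ∏ i ∈ s, f i :=
      ih (fun i hi => hf i (Finset.mem_insert_of_mem hi))
    have h2 : 1 ≤ f a := hf a (Finset.mem_insert_self a s)
    have hp : 1 ≤ ∏ i ∈ s, f i :=
      Finset.one_le_prod' (fun i hi => hf i (Finset.mem_insert_of_mem hi))
    calc f a - 1 + ∑ i ∈ s, (f i - 1) + 1 ≤ (f a - 1) + ∏ i ∈ s, f i := by omega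
    _ ≤ (f a - 1) * ∏ i ∈ s, f i + ∏ i ∈ s, f i := by
        have := Nat.le_mul_of_pos_right (f a - 1) hp; omega
    _ = f a * ∏ i ∈ s, f i := by
        have h3 : ∏ i ∈ s, f i ≤ f a * ∏ i ∈ s, f i := Nat.le_mul_of_pos_left _ h2
        rw [Nat.sub_one_mul]; omega

/-- Theorem 1(i) (Gutman 2011): for any tree `T` on `n ≥ 5` vertices, the
Narumi–Katayama index satisfies `n - 1 ≤ ∏_v d(v) ≤ 2^(n-2)`. -/
theorem gutman_nk {V : Type*} [Fintype V] (G : SimpleGraph V) [DecidableRel G.Adj]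
    (n : ℕ) (hn : 5 ≤ n) (hcard : Fintype.card V = n) (hT : G.IsTree) :
    n - 1 ≤ ∏ v, G.degree v ∧ ∏ v, G.degree v ≤ 2 ^ (n - 2) := by
  classical
  have hedges : G.edgeFinset.card + 1 = n := by rw [← hcard]; exact hT.card_edgeFinset
  have hsum : ∑ v, G.degree v = 2 * G.edgeFinset.card := G.sum_degrees_eq_twice_card_edges
  have hdeg : ∀ v : V, 1 ≤ G.degree v := by
    intro v
    obtain ⟨w, hw⟩ := Fintype.exists_ne_of_one_lt_card (by omega) v
    obtain ⟨p⟩ := hT.isConnected v w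
    cases p with
    | nil => exact absurd rfl hw
    | cons h _ => exact G.degree_pos_iff_exists_adj v |>.mpr ⟨_, h⟩
  have hsumdm1 : ∑ v : V, (G.degree v - 1) = n - 2 := by
    have h1 : ∑ v : V, (G.degree v - 1 + 1) = ∑ v, G.degree v :=
      Finset.sum_congr rfl (fun i _ => by have := hdeg i; omega)
    rw [Finset.sum_add_distrib, Finset.sum_const, Finset.card_univ, hcard, smul_eq_mul, mul_one] at h1
    omega
  constructor
  · have := aux_sum_le_prod Finset.univ (fun v => G.degree v) (fun i _ => hdeg i)
    omega
  · calc ∏ v, G.degree v ≤ ∏ v, 2 ^ (G.degree v - 1) :=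
        Finset.prod_le_prod' (fun i _ => aux_le_two_pow _ (hdeg i))
    _ = 2 ^ ∑ v : V, (G.degree v - 1) := by rw [Finset.prod_pow_eq_pow_sum]
    _ = 2 ^ (n - 2) := by rw [hsumdm1]
end

section
/- For any tree T on n ≥ 5 vertices, ∏_2(P_n) ≤ ∏_2(T) ≤ ∏_2(S_n), i.e., 4^{n-2} ≤ ∏_{v ∈ V(T)} d(v)^{d(v)} ≤ (n-1)^{n-1}. -/
lemma three_pow_ge (a : ℕ) : 2 * a + 1 ≤ 3 ^ (a + 1) := by
  induction a with
  | zero => norm_num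
  | succ k ih =>
    have h : 3 ^ (k + 1 + 1) = 3 * 3 ^ (k + 1) := by ring
    omega

lemma diag_key (a : ℕ) (ha : 1 ≤ a) :
    (a + 1) ^ (2 * a + 2) ≤ (2 * a + 1) ^ (2 * a + 1) := by
  rcases le_or_gt a 2 with h | h
  · interval_cases a <;> decide
  · have h3 : 3 * (a + 1) ^ 2 ≤ (2 * a + 1) ^ 2 := by nlinarith
    have step : (2 * a + 1) * (a + 1) ^ (2 * a + 2) ≤
        (2 * a + 1) * (2 * a + 1) ^ (2 * a + 1) := by
      calc (2 * a + 1) * (a + 1) ^ (2 * a + 2)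
          ≤ 3 ^ (a + 1) * (a + 1) ^ (2 * a + 2) :=
            Nat.mul_le_mul_right _ (three_pow_ge a)
        _ = (3 * (a + 1) ^ 2) ^ (a + 1) := by
            rw [show 2 * a + 2 = 2 * (a + 1) by ring, pow_mul, ← mul_pow]
        _ ≤ ((2 * a + 1) ^ 2) ^ (a + 1) := Nat.pow_le_pow_left h3 _
        _ = (2 * a + 1) * (2 * a + 1) ^ (2 * a + 1) := by
            rw [← pow_mul, show 2 * (a + 1) = 2 * a + 1 + 1 by ring, pow_succ,
              mul_comm]
    exact Nat.le_of_mul_le_mul_left step (by omega)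

lemma key_aux (a b : ℕ) (hab : b ≤ a) :
    (a + 1) ^ (a + 1) * (b + 1) ^ (b + 1) ≤ (a + b + 1) ^ (a + b + 1) := by
  rcases Nat.eq_zero_or_pos b with hb | hb
  · subst hb; simp
  rcases eq_or_lt_of_le hab with heq | hlt
  · subst heq
    have := diag_key b hb
    calc (b + 1) ^ (b + 1) * (b + 1) ^ (b + 1) = (b + 1) ^ (2 * b + 2) := by ring
      _ ≤ (2 * b + 1) ^ (2 * b + 1) := this
      _ = (b + b + 1) ^ (b + b + 1) := by ring_nf
  · have h2b : b + 1 ≤ 2 ^ b := Nat.lt_two_pow_self (n := b)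
    calc (a + 1) ^ (a + 1) * (b + 1) ^ (b + 1)
        ≤ (a + b + 1) ^ (a + 1) * (b + 1) ^ (b + 1) :=
          Nat.mul_le_mul_right _ (Nat.pow_le_pow_left (by omega) _)
      _ = (a + b + 1) ^ (a + 1) * ((b + 1) ^ b * (b + 1)) := by ring
      _ ≤ (a + b + 1) ^ (a + 1) * ((b + 1) ^ b * 2 ^ b) :=
          Nat.mul_le_mul_left _ (Nat.mul_le_mul_left _ h2b)
      _ = (a + b + 1) ^ (a + 1) * (2 * (b + 1)) ^ b := by rw [mul_pow]; ring
      _ ≤ (a + b + 1) ^ (a + 1) * (a + b + 1) ^ b :=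
          Nat.mul_le_mul_left _ (Nat.pow_le_pow_left (by omega) _)
      _ = (a + b + 1) ^ (a + b + 1) := by
          rw [← pow_add, Nat.add_right_comm]

lemma key (a b : ℕ) :
    (a + 1) ^ (a + 1) * (b + 1) ^ (b + 1) ≤ (a + b + 1) ^ (a + b + 1) := by
  rcases le_total b a with h | h
  · exact key_aux a b h
  · have := key_aux b a h
    rwa [mul_comm, Nat.add_comm b a] at this

lemma fold_key {V : Type*} [DecidableEq V] (s : Finset V) (e : V → ℕ) :
    (∏ v ∈ s, (e v + 1) ^ (e v + 1)) ≤
      ((∑ v ∈ s, e v) + 1) ^ ((∑ v ∈ s, e v) + 1) := by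
  induction s using Finset.induction with
  | empty => simp
  | @insert a s ha ih =>
    rw [Finset.prod_insert ha, Finset.sum_insert ha]
    calc (e a + 1) ^ (e a + 1) * ∏ v ∈ s, (e v + 1) ^ (e v + 1)
        ≤ (e a + 1) ^ (e a + 1) *
            ((∑ v ∈ s, e v) + 1) ^ ((∑ v ∈ s, e v) + 1) :=
          Nat.mul_le_mul_left _ ih
      _ ≤ (e a + (∑ v ∈ s, e v) + 1) ^ (e a + (∑ v ∈ s, e v) + 1) := key _ _

lemma low_key (d : ℕ) (hd : 1 ≤ d) : 4 ^ (d - 1) ≤ d ^ d := by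
  rcases le_or_gt d 3 with h | h
  · interval_cases d <;> decide
  · calc 4 ^ (d - 1) ≤ 4 ^ d := Nat.pow_le_pow_right (by norm_num) (Nat.sub_le d 1)
      _ ≤ d ^ d := Nat.pow_le_pow_left (by omega) d

/-- Theorem 1(ii) (Gutman 2011): for any tree `T` on `n ≥ 5` vertices,
`4^(n-2) ≤ ∏_v d(v)^{d(v)} ≤ (n-1)^(n-1)`. -/
theorem gutman_zagreb2 {V : Type*} [Fintype V] (G : SimpleGraph V) [DecidableRel G.Adj]
    (n : ℕ) (hn : 5 ≤ n) (hcard : Fintype.card V = n) (hT : G.IsTree) :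
    4 ^ (n - 2) ≤ ∏ v, G.degree v ^ G.degree v ∧
      ∏ v, G.degree v ^ G.degree v ≤ (n - 1) ^ (n - 1) := by
  classical
  have hconn : G.Connected := hT.isConnected
  have hd1 : ∀ v, 1 ≤ G.degree v := by
    intro v
    refine (G.degree_pos_iff_exists_adj v).mpr ?_
    have h2 : 1 < Fintype.card V := by omega
    obtain ⟨w, hw⟩ := Fintype.exists_ne_of_one_lt_card h2 v
    obtain ⟨p⟩ := hconn.preconnected v w
    cases p with
    | nil => exact absurd rfl hw
    | cons h q => exact ⟨_, h⟩
  have hedge : G.edgeFinset.card + 1 = Fintype.card V := hT.card_edgeFinset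
  have hs : ∑ v, G.degree v = 2 * G.edgeFinset.card :=
    G.sum_degrees_eq_twice_card_edges
  have hsum : ∑ v, G.degree v = 2 * (n - 1) := by
    rw [hs]; omega
  set e : V → ℕ := fun v => G.degree v - 1 with he
  have hde : ∀ v, G.degree v = e v + 1 := fun v => by
    have := hd1 v; simp [he]; omega
  have hprod : ∏ v, G.degree v ^ G.degree v = ∏ v, (e v + 1) ^ (e v + 1) :=
    Finset.prod_congr rfl fun v _ => by rw [hde v]
  have hsume : ∑ v, e v = n - 2 := by
    have h1 : ∑ v, (e v + 1) = ∑ v, G.degree v :=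
      Finset.sum_congr rfl fun v _ => (hde v).symm
    rw [Finset.sum_add_distrib, Finset.sum_const, Finset.card_univ, hcard,
      smul_eq_mul, mul_one, hsum] at h1
    omega
  constructor
  · calc 4 ^ (n - 2) = 4 ^ (∑ v, e v) := by rw [hsume]
      _ = ∏ v, 4 ^ e v := (Finset.prod_pow_eq_pow_sum _ _ _).symm
      _ ≤ ∏ v, (e v + 1) ^ (e v + 1) := by
          refine Finset.prod_le_prod' fun v _ => ?_
          have := low_key (e v + 1) (by omega)
          simpa using this
      _ = ∏ v, G.degree v ^ G.degree v := hprod.symm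
  · calc ∏ v, G.degree v ^ G.degree v
        = ∏ v, (e v + 1) ^ (e v + 1) := hprod
      _ ≤ ((∑ v, e v) + 1) ^ ((∑ v, e v) + 1) := fold_key _ _
      _ = (n - 1) ^ (n - 1) := by rw [hsume]; congr 1 <;> omega
end

section
/- Let G be a k-tree on n vertices. Then ∏_{1,c}(S_{k,n-k}) ≤ ∏_{1,c}(G) ≤ ∏_{1,c}(P_n^k) for every real c > 0, with equality on the left iff G ≅ S_{k,n-k} and on the right iff G ≅ P_n^k. -/
open scoped Classical

/-- Adding one new vertex (the last one of `Fin (n+1)`) joined to the set `S`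
of vertices of a graph `G` on `Fin n`. -/
def addSimplicialVertex {n : ℕ} (G : SimpleGraph (Fin n)) (S : Finset (Fin n)) :
    SimpleGraph (Fin (n + 1)) :=
  SimpleGraph.fromRel (fun a b =>
    (∃ (ha : a.val < n) (hb : b.val < n), G.Adj ⟨a.val, ha⟩ ⟨b.val, hb⟩) ∨
    (a.val = n ∧ ∃ hb : b.val < n, (⟨b.val, hb⟩ : Fin n) ∈ S))

/-- The recursive definition of a `k`-tree: the complete graph `K_k` is a `k`-tree, and
joining a new vertex to all vertices of a `k`-clique of a `k`-tree yields a `k`-tree. -/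
inductive IsKTree (k : ℕ) : {n : ℕ} → SimpleGraph (Fin n) → Prop
  | base : IsKTree k (⊤ : SimpleGraph (Fin k))
  | extend {n : ℕ} {G : SimpleGraph (Fin n)} (S : Finset (Fin n))
      (hcard : S.card = k) (hclique : G.IsClique ↑S) (hG : IsKTree k G) :
      IsKTree k (addSimplicialVertex G S)

/-- The `k`-star `S_{k,n-k}`. -/
def kStar (n k : ℕ) : SimpleGraph (Fin n) where
  Adj i j := i ≠ j ∧ (i.val < k ∨ j.val < k)
  symm := ⟨fun i j h => ⟨h.1.symm, h.2.symm⟩⟩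
  loopless := ⟨fun i h => h.1 rfl⟩

/-- The `k`-path `P_n^k`. -/
def kPath (n k : ℕ) : SimpleGraph (Fin n) where
  Adj i j := i ≠ j ∧ i.val ≤ j.val + k ∧ j.val ≤ i.val + k
  symm := ⟨fun i j h => ⟨h.1.symm, h.2.2, h.2.1⟩⟩
  loopless := ⟨fun i h => h.1 rfl⟩

/-- The first generalized multiplicative Zagreb index `∏_{1,c}(G) = ∏_v d(v)^c`. -/
noncomputable def Z1 {n : ℕ} (G : SimpleGraph (Fin n)) (c : ℝ) : ℝ :=
  ∏ v, (G.degree v : ℝ) ^ c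

namespace KT

open SimpleGraph Finset

variable {n m k : ℕ}

lemma kStar_adj {i j : Fin n} : (kStar n k).Adj i j ↔ i ≠ j ∧ (i.val < k ∨ j.val < k) :=
  Iff.rfl

lemma kPath_adj {i j : Fin n} :
    (kPath n k).Adj i j ↔ i ≠ j ∧ i.val ≤ j.val + k ∧ j.val ≤ i.val + k := Iff.rfl

lemma addS_adj_iff {G : SimpleGraph (Fin n)} {S : Finset (Fin n)} {a b : Fin (n+1)} :
    (addSimplicialVertex G S).Adj a b ↔
      (∃ (ha : a.val < n) (hb : b.val < n), G.Adj ⟨a.val, ha⟩ ⟨b.val, hb⟩) ∨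
      (a.val = n ∧ ∃ hb : b.val < n, (⟨b.val, hb⟩ : Fin n) ∈ S) ∨
      (b.val = n ∧ ∃ ha : a.val < n, (⟨a.val, ha⟩ : Fin n) ∈ S) := by
  unfold addSimplicialVertex
  rw [SimpleGraph.fromRel_adj]
  constructor
  · rintro ⟨hne, (⟨ha, hb, h⟩ | ⟨ha, hb, h⟩) | (⟨ha, hb, h⟩ | ⟨ha, hb, h⟩)⟩
    · exact Or.inl ⟨ha, hb, h⟩
    · exact Or.inr (Or.inl ⟨ha, hb, h⟩)
    · exact Or.inl ⟨hb, ha, h.symm⟩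
    · exact Or.inr (Or.inr ⟨ha, hb, h⟩)
  · rintro (⟨ha, hb, h⟩ | ⟨ha, hb, h⟩ | ⟨ha, hb, h⟩)
    · refine ⟨fun hab => h.ne ?_, Or.inl (Or.inl ⟨ha, hb, h⟩)⟩
      simpa [Fin.ext_iff] using congrArg Fin.val hab
    · refine ⟨fun hab => ?_, Or.inl (Or.inr ⟨ha, hb, h⟩)⟩
      rw [hab] at ha; omega
    · refine ⟨fun hab => ?_, Or.inr (Or.inr ⟨ha, hb, h⟩)⟩
      rw [hab] at hb; omega

lemma addS_adj_castSucc_castSucc {G : SimpleGraph (Fin n)} {S : Finset (Fin n)} {x y : Fin n} :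
    (addSimplicialVertex G S).Adj x.castSucc y.castSucc ↔ G.Adj x y := by
  rw [addS_adj_iff]
  constructor
  · rintro (⟨ha, hb, h⟩ | ⟨ha, hb, h⟩ | ⟨ha, hb, h⟩)
    · have e1 : (⟨(x.castSucc : Fin (n+1)).val, ha⟩ : Fin n) = x := by simp [Fin.ext_iff]
      have e2 : (⟨(y.castSucc : Fin (n+1)).val, hb⟩ : Fin n) = y := by simp [Fin.ext_iff]
      rwa [e1, e2] at h
    · exact absurd ha (by have := x.isLt; simp; omega)
    · exact absurd ha (by have := y.isLt; simp; omega)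
  · intro h
    refine Or.inl ⟨by simpa using x.isLt, by simpa using y.isLt, ?_⟩
    have e1 : (⟨(x.castSucc : Fin (n+1)).val, by simpa using x.isLt⟩ : Fin n) = x := by
      simp [Fin.ext_iff]
    have e2 : (⟨(y.castSucc : Fin (n+1)).val, by simpa using y.isLt⟩ : Fin n) = y := by
      simp [Fin.ext_iff]
    rw [e1, e2]; exact h

lemma addS_adj_last_castSucc {G : SimpleGraph (Fin n)} {S : Finset (Fin n)} {y : Fin n} :
    (addSimplicialVertex G S).Adj (Fin.last n) y.castSucc ↔ y ∈ S := by
  rw [addS_adj_iff]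
  constructor
  · rintro (⟨ha, hb, h⟩ | ⟨ha, hb, h⟩ | ⟨ha, hb, h⟩)
    · exact absurd ha (by simp)
    · have e2 : (⟨(y.castSucc : Fin (n+1)).val, hb⟩ : Fin n) = y := by simp [Fin.ext_iff]
      rwa [e2] at h
    · exact absurd ha (by have := y.isLt; simp; omega)
  · intro h
    refine Or.inr (Or.inl ⟨by simp, by simpa using y.isLt, ?_⟩)
    have e2 : (⟨(y.castSucc : Fin (n+1)).val, by simpa using y.isLt⟩ : Fin n) = y := by
      simp [Fin.ext_iff]
    rw [e2]; exact h

lemma castSucc_ne_last (x : Fin n) : x.castSucc ≠ Fin.last n := by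
  simp [Fin.ext_iff]; omega

lemma addS_neighborFinset_last {G : SimpleGraph (Fin n)} {S : Finset (Fin n)} :
    (addSimplicialVertex G S).neighborFinset (Fin.last n) = S.map Fin.castSuccEmb := by
  ext w
  simp only [SimpleGraph.mem_neighborFinset, Finset.mem_map, Fin.castSuccEmb]
  constructor
  · intro h
    have hw : w.val < n := by
      have h1 : w ≠ Fin.last n := h.ne'
      have h2 : w.val ≠ n := fun hh => h1 (Fin.ext (by simp [hh]))
      have := w.isLt; omega
    refine ⟨⟨w.val, hw⟩, ?_, by simp [Fin.ext_iff]⟩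
    have : (⟨w.val, hw⟩ : Fin n).castSucc = w := by simp [Fin.ext_iff]
    rwa [← this, addS_adj_last_castSucc] at h
  · rintro ⟨y, hy, rfl⟩
    exact (addS_adj_last_castSucc (G := G)).2 hy

lemma addS_neighborFinset_castSucc {G : SimpleGraph (Fin n)} {S : Finset (Fin n)} (x : Fin n) :
    (addSimplicialVertex G S).neighborFinset x.castSucc =
      (G.neighborFinset x).map Fin.castSuccEmb ∪ (if x ∈ S then {Fin.last n} else ∅) := by
  ext w
  by_cases hw : w = Fin.last n
  · subst hw
    simp only [SimpleGraph.mem_neighborFinset, Finset.mem_union, Finset.mem_map]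
    constructor
    · intro h
      rw [(addSimplicialVertex G S).adj_comm, addS_adj_last_castSucc] at h
      simp [h]
    · rintro (⟨y, hy, hcast⟩ | h)
      · exact absurd hcast (castSucc_ne_last y)
      · rw [(addSimplicialVertex G S).adj_comm, addS_adj_last_castSucc]
        by_cases hxS : x ∈ S
        · exact hxS
        · simp [hxS] at h
  · have hwlt : w.val < n := by
      have h1 := w.isLt
      have h2 : w.val ≠ n := fun hh => hw (Fin.ext (by simp [hh]))
      omega
    have hrw : (⟨w.val, hwlt⟩ : Fin n).castSucc = w := by simp [Fin.ext_iff]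
    have hite : w ∉ (if x ∈ S then ({Fin.last n} : Finset (Fin (n+1))) else ∅) := by
      split
      · simpa using hw
      · simp
    have hAdj := addS_adj_castSucc_castSucc (G := G) (S := S) (x := x) (y := (⟨w.val, hwlt⟩ : Fin n))
    rw [hrw] at hAdj
    have hmap : w ∈ (G.neighborFinset x).map Fin.castSuccEmb ↔ G.Adj x ⟨w.val, hwlt⟩ := by
      rw [Finset.mem_map]
      constructor
      · rintro ⟨y, hy, hcast⟩
        have hc2 : y.castSucc = w := hcast
        have hyw : y = ⟨w.val, hwlt⟩ := by
          apply Fin.castSucc_injective n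
          rw [hc2, hrw]
        subst hyw
        exact (SimpleGraph.mem_neighborFinset _ _ _).1 hy
      · intro h
        exact ⟨⟨w.val, hwlt⟩, (SimpleGraph.mem_neighborFinset _ _ _).2 h, hrw⟩
    rw [Finset.mem_union, SimpleGraph.mem_neighborFinset, hAdj, hmap]
    exact (or_iff_left hite).symm

lemma degree_addS_last {G : SimpleGraph (Fin n)} {S : Finset (Fin n)} :
    (addSimplicialVertex G S).degree (Fin.last n) = S.card := by
  rw [SimpleGraph.degree, addS_neighborFinset_last, Finset.card_map]

lemma degree_addS_castSucc {G : SimpleGraph (Fin n)} {S : Finset (Fin n)} (x : Fin n) :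
    (addSimplicialVertex G S).degree x.castSucc
      = G.degree x + (if x ∈ S then 1 else 0) := by
  rw [SimpleGraph.degree, addS_neighborFinset_castSucc]
  rw [Finset.card_union_of_disjoint, Finset.card_map]
  · congr 1
    split <;> simp
  · refine Finset.disjoint_left.2 ?_
    rintro a ha hb
    obtain ⟨y, -, rfl⟩ := Finset.mem_map.1 ha
    split at hb
    · exact absurd (Finset.mem_singleton.1 hb) (castSucc_ne_last y)
    · simp at hb

noncomputable def PR {n : ℕ} (G : SimpleGraph (Fin n)) : ℝ := ∏ v, (G.degree v : ℝ)

lemma PR_nonneg {G : SimpleGraph (Fin n)} : 0 ≤ PR G :=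
  Finset.prod_nonneg fun _ _ => Nat.cast_nonneg _

noncomputable def gg (d : ℕ) : ℝ := ((d : ℝ) + 1) / d

lemma gg_pos {d : ℕ} (hd : 0 < d) : 0 < gg d := by
  have : (0:ℝ) < d := by exact_mod_cast hd
  unfold gg; positivity

lemma one_lt_gg {d : ℕ} (hd : 0 < d) : 1 < gg d := by
  have : (0:ℝ) < d := by exact_mod_cast hd
  rw [gg, lt_div_iff₀ this]; linarith

lemma gg_anti {a b : ℕ} (ha : 0 < a) (hab : a ≤ b) : gg b ≤ gg a := by
  have ha' : (0:ℝ) < a := by exact_mod_cast ha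
  have hb' : (0:ℝ) < b := by exact_mod_cast (lt_of_lt_of_le ha hab)
  rw [gg, gg, div_le_div_iff₀ hb' ha']
  have : (a:ℝ) ≤ b := by exact_mod_cast hab
  nlinarith

lemma gg_inj {a b : ℕ} (ha : 0 < a) (hb : 0 < b) (h : gg a = gg b) : a = b := by
  have ha' : (0:ℝ) < a := by exact_mod_cast ha
  have hb' : (0:ℝ) < b := by exact_mod_cast hb
  rw [gg, gg, div_eq_div_iff ha'.ne' hb'.ne'] at h
  have : (a:ℝ) = b := by nlinarith
  exact_mod_cast this

lemma gg_mul_cancel {d : ℕ} (hd : 0 < d) : gg d * d = (d : ℝ) + 1 := by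
  have : (d:ℝ) ≠ 0 := by exact_mod_cast hd.ne'
  rw [gg, div_mul_cancel₀]
  exact this

lemma PR_addS {G : SimpleGraph (Fin n)} {S : Finset (Fin n)} :
    PR (addSimplicialVertex G S) =
      (S.card : ℝ) * ((∏ v ∈ S, ((G.degree v : ℝ) + 1)) * ∏ v ∈ Sᶜ, (G.degree v : ℝ)) := by
  unfold PR
  rw [Fin.prod_univ_castSucc]
  rw [degree_addS_last]
  have h1 : ∀ x : Fin n, ((addSimplicialVertex G S).degree x.castSucc : ℝ)
      = (G.degree x : ℝ) + (if x ∈ S then 1 else 0) := by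
    intro x
    rw [degree_addS_castSucc]
    push_cast
    split <;> simp
  rw [Finset.prod_congr rfl fun x _ => h1 x]
  rw [← Finset.prod_mul_prod_compl S]
  rw [mul_comm]
  congr 1
  congr 1
  · exact Finset.prod_congr rfl fun x hx => by simp [hx]
  · exact Finset.prod_congr rfl fun x hx => by simp [Finset.mem_compl.1 hx]

lemma PR_addS' {G : SimpleGraph (Fin n)} {S : Finset (Fin n)}
    (hdeg : ∀ v ∈ S, 0 < G.degree v) :
    PR (addSimplicialVertex G S) = (S.card : ℝ) * (∏ v ∈ S, gg (G.degree v)) * PR G := by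
  rw [PR_addS]
  have : PR G = (∏ v ∈ S, (G.degree v : ℝ)) * ∏ v ∈ Sᶜ, (G.degree v : ℝ) :=
    (Finset.prod_mul_prod_compl S _).symm
  rw [this, mul_assoc]
  congr 1
  rw [← mul_assoc, ← Finset.prod_mul_distrib]
  congr 1
  exact (Finset.prod_congr rfl fun x hx => (gg_mul_cancel (hdeg x hx)).symm)

lemma card_filter_fin {m : ℕ} (Q : Fin m → Prop) [DecidablePred Q] (P : ℕ → Prop)
    [DecidablePred P] (h : ∀ v, Q v ↔ P v.val) :
    ((Finset.univ : Finset (Fin m)).filter Q).card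
      = ((Finset.range m).filter P).card := by
  refine Finset.card_bij (fun a _ => a.val) ?_ ?_ ?_
  · intro a ha
    simp only [Finset.mem_filter, Finset.mem_range]
    exact ⟨a.isLt, (h a).1 (Finset.mem_filter.1 ha).2⟩
  · intro a _ b _ h
    exact Fin.ext h
  · intro b hb
    simp only [Finset.mem_filter, Finset.mem_range] at hb
    exact ⟨⟨b, hb.1⟩, by simp [h, hb.2], rfl⟩

lemma degree_top_fin (v : Fin m) : (⊤ : SimpleGraph (Fin m)).degree v = m - 1 := by
  rw [SimpleGraph.complete_graph_degree, Fintype.card_fin]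

lemma degree_kStar (hk : k ≤ m) (v : Fin m) :
    (kStar m k).degree v = if v.val < k then m - 1 else k := by
  rw [SimpleGraph.degree, SimpleGraph.neighborFinset_eq_filter]
  have hpred : ∀ w : Fin m, (kStar m k).Adj v w ↔
      (fun j => j ≠ v.val ∧ (v.val < k ∨ j < k)) w.val := by
    intro w
    rw [kStar_adj]
    constructor
    · rintro ⟨h1, h2⟩
      exact ⟨fun hh => h1 (Fin.ext hh.symm), h2⟩
    · rintro ⟨h1, h2⟩
      exact ⟨fun hh => h1 (congrArg Fin.val hh.symm), h2⟩
  rw [card_filter_fin _ (fun j => j ≠ v.val ∧ (v.val < k ∨ j < k)) hpred]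
  by_cases hv : v.val < k
  · have : (Finset.range m).filter (fun j => j ≠ v.val ∧ (v.val < k ∨ j < k))
        = (Finset.range m).erase v.val := by
      ext j
      simp only [Finset.mem_filter, Finset.mem_erase, Finset.mem_range]
      omega
    rw [this, Finset.card_erase_of_mem (Finset.mem_range.2 v.isLt), Finset.card_range]
    simp [hv]
  · have : (Finset.range m).filter (fun j => j ≠ v.val ∧ (v.val < k ∨ j < k))
        = Finset.range k := by
      ext j
      simp only [Finset.mem_filter, Finset.mem_range]
      have := v.isLt
      omega
    rw [this, Finset.card_range]
    simp [hv]

lemma degree_kPath (v : Fin m) :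
    (kPath m k).degree v = min v.val k + min (m - 1 - v.val) k := by
  rw [SimpleGraph.degree, SimpleGraph.neighborFinset_eq_filter]
  have hpred : ∀ w : Fin m, (kPath m k).Adj v w ↔
      (fun j => j ≠ v.val ∧ v.val ≤ j + k ∧ j ≤ v.val + k) w.val := by
    intro w
    rw [kPath_adj]
    constructor
    · rintro ⟨h1, h2⟩
      exact ⟨fun hh => h1 (Fin.ext hh.symm), h2⟩
    · rintro ⟨h1, h2⟩
      exact ⟨fun hh => h1 (congrArg Fin.val hh.symm), h2⟩
  rw [card_filter_fin _ (fun j => j ≠ v.val ∧ v.val ≤ j + k ∧ j ≤ v.val + k) hpred]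
  have hsplit : (Finset.range m).filter (fun j => j ≠ v.val ∧ v.val ≤ j + k ∧ j ≤ v.val + k)
      = Finset.Ico (v.val - k) v.val ∪ Finset.Ico (v.val + 1) (min (v.val + k + 1) m) := by
    ext j
    simp only [Finset.mem_filter, Finset.mem_range, Finset.mem_union, Finset.mem_Ico]
    have := v.isLt
    omega
  rw [hsplit, Finset.card_union_of_disjoint, Nat.card_Ico, Nat.card_Ico]
  · have := v.isLt
    omega
  · refine Finset.disjoint_left.2 fun a ha hb => ?_
    simp only [Finset.mem_Ico] at ha hb
    omega

def Ck (m k : ℕ) : Finset (Fin m) := Finset.univ.filter (fun v => v.val < k)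

def Wend (m k : ℕ) : Finset (Fin m) := Finset.univ.filter (fun v => m ≤ v.val + k)

lemma card_Ck (hk : k ≤ m) : (Ck m k).card = k := by
  rw [Ck, card_filter_fin _ (fun j => j < k) (fun v => Iff.rfl)]
  have : (Finset.range m).filter (fun j => j < k) = Finset.range k := by
    ext j
    simp only [Finset.mem_filter, Finset.mem_range]
    omega
  rw [this, Finset.card_range]

lemma card_Wend (hk : k ≤ m) : (Wend m k).card = k := by
  rw [Wend, card_filter_fin _ (fun j => m ≤ j + k) (fun v => Iff.rfl)]
  have : (Finset.range m).filter (fun j => m ≤ j + k) = Finset.Ico (m - k) m := by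
    ext j
    simp only [Finset.mem_filter, Finset.mem_range, Finset.mem_Ico]
    omega
  rw [this, Nat.card_Ico]
  omega

lemma mem_Ck {v : Fin m} : v ∈ Ck m k ↔ v.val < k := by simp [Ck]

lemma mem_Wend {v : Fin m} : v ∈ Wend m k ↔ m ≤ v.val + k := by simp [Wend]

lemma kStar_eq_top : kStar k k = (⊤ : SimpleGraph (Fin k)) := by
  ext a b
  rw [kStar_adj, SimpleGraph.top_adj]
  have := a.isLt
  tauto

lemma kPath_eq_top : kPath k k = (⊤ : SimpleGraph (Fin k)) := by
  ext a b
  rw [kPath_adj, SimpleGraph.top_adj]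
  have := a.isLt
  have := b.isLt
  constructor
  · tauto
  · intro h
    exact ⟨h, by omega, by omega⟩

lemma fin_val_cases (a : Fin (m+1)) : a = Fin.last m ∨ ∃ x : Fin m, a = x.castSucc := by
  by_cases h : a.val = m
  · exact Or.inl (Fin.ext (by simp [h]))
  · have := a.isLt
    exact Or.inr ⟨⟨a.val, by omega⟩, Fin.ext (by simp)⟩

lemma addS_kStar (hk : k ≤ m) :
    addSimplicialVertex (kStar m k) (Ck m k) = kStar (m+1) k := by
  ext a b
  rcases fin_val_cases a with rfl | ⟨x, rfl⟩ <;> rcases fin_val_cases b with rfl | ⟨y, rfl⟩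
  · simp [kStar_adj]
  · rw [addS_adj_last_castSucc, kStar_adj, mem_Ck]
    have h1 := y.isLt
    have h2 : (Fin.last m : Fin (m+1)) ≠ y.castSucc := (castSucc_ne_last y).symm
    simp only [Fin.val_last, Fin.coe_castSucc]
    constructor
    · intro h; exact ⟨h2, Or.inr h⟩
    · rintro ⟨-, (h | h)⟩ <;> omega
  · rw [(addSimplicialVertex _ _).adj_comm, (kStar (m+1) k).adj_comm,
      addS_adj_last_castSucc, kStar_adj, mem_Ck]
    have h1 := x.isLt
    have h2 : (Fin.last m : Fin (m+1)) ≠ x.castSucc := (castSucc_ne_last x).symm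
    simp only [Fin.val_last, Fin.coe_castSucc]
    constructor
    · intro h; exact ⟨h2, Or.inr h⟩
    · rintro ⟨-, (h | h)⟩ <;> omega
  · rw [addS_adj_castSucc_castSucc, kStar_adj, kStar_adj]
    simp only [Fin.coe_castSucc, ne_eq]
    constructor
    · rintro ⟨h1, h2⟩
      exact ⟨fun hh => h1 (by exact Fin.castSucc_injective m hh), h2⟩
    · rintro ⟨h1, h2⟩
      exact ⟨fun hh => h1 (by rw [hh]), h2⟩

lemma addS_kPath (hk : k ≤ m) :
    addSimplicialVertex (kPath m k) (Wend m k) = kPath (m+1) k := by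
  ext a b
  rcases fin_val_cases a with rfl | ⟨x, rfl⟩ <;> rcases fin_val_cases b with rfl | ⟨y, rfl⟩
  · simp [kPath_adj]
  · rw [addS_adj_last_castSucc, kPath_adj, mem_Wend]
    have h1 := y.isLt
    have h2 : (Fin.last m : Fin (m+1)) ≠ y.castSucc := (castSucc_ne_last y).symm
    simp only [Fin.val_last, Fin.coe_castSucc]
    constructor
    · intro h; exact ⟨h2, by omega, by omega⟩
    · rintro ⟨-, h, h'⟩; omega
  · rw [(addSimplicialVertex _ _).adj_comm, (kPath (m+1) k).adj_comm,
      addS_adj_last_castSucc, kPath_adj, mem_Wend]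
    have h1 := x.isLt
    have h2 : (Fin.last m : Fin (m+1)) ≠ x.castSucc := (castSucc_ne_last x).symm
    simp only [Fin.val_last, Fin.coe_castSucc]
    constructor
    · intro h; exact ⟨h2, by omega, by omega⟩
    · rintro ⟨-, h, h'⟩; omega
  · rw [addS_adj_castSucc_castSucc, kPath_adj, kPath_adj]
    simp only [Fin.coe_castSucc, ne_eq]
    constructor
    · rintro ⟨h1, h2⟩
      exact ⟨fun hh => h1 (by exact Fin.castSucc_injective m hh), h2⟩
    · rintro ⟨h1, h2⟩
      exact ⟨fun hh => h1 (by rw [hh]), h2⟩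

lemma degree_of_eq_top {G : SimpleGraph (Fin m)} (h : G = ⊤) (v : Fin m) :
    G.degree v = m - 1 := by
  classical
  rw [SimpleGraph.degree, SimpleGraph.neighborFinset_eq_filter]
  have hfe : Finset.univ.filter (G.Adj v) = Finset.univ.erase v := by
    ext w
    simp only [Finset.mem_filter, Finset.mem_univ, true_and, Finset.mem_erase, and_true]
    rw [h, SimpleGraph.top_adj]
    exact ⟨fun hh => hh.symm, fun hh => hh.symm⟩
  rw [hfe, Finset.card_erase_of_mem (Finset.mem_univ v), Finset.card_univ, Fintype.card_fin]

lemma ktree_le_card : ∀ {m : ℕ} {G : SimpleGraph (Fin m)}, IsKTree k G → k ≤ m := by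
  intro m G hG
  induction hG with
  | base => exact le_rfl
  | extend T hc hcl hG ih => omega

lemma ktree_eq_top : ∀ {m : ℕ} {G : SimpleGraph (Fin m)}, IsKTree k G → m ≤ k → G = ⊤ := by
  intro m G hG
  induction hG with
  | base => intro _; rfl
  | @extend m' G' T hc hcl hG ih =>
    intro hm
    exact absurd (ktree_le_card hG) (by omega)

lemma mem_T_of_clique {G : SimpleGraph (Fin m)} {T : Finset (Fin m)} {S : Finset (Fin (m+1))}
    (hS : (addSimplicialVertex G T).IsClique ↑S) (hlast : Fin.last m ∈ S) {x : Fin m}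
    (hx : x.castSucc ∈ S) : x ∈ T := by
  have := hS (Finset.mem_coe.2 hlast) (Finset.mem_coe.2 hx) (castSucc_ne_last x).symm
  exact addS_adj_last_castSucc.1 this

lemma pullback_clique {G : SimpleGraph (Fin m)} {T : Finset (Fin m)} {S : Finset (Fin (m+1))}
    (hS : (addSimplicialVertex G T).IsClique ↑S) (hlast : Fin.last m ∉ S) :
    ∃ S₀ : Finset (Fin m), S = S₀.image Fin.castSucc ∧ S₀.card = S.card ∧ G.IsClique ↑S₀ := by
  classical
  set F := Finset.univ.filter (fun y : Fin m => y.castSucc ∈ S) with hF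
  have heq : S = F.image Fin.castSucc := by
    ext a
    rcases fin_val_cases a with rfl | ⟨x, rfl⟩
    · simp only [Finset.mem_image]
      constructor
      · intro h; exact absurd h hlast
      · rintro ⟨y, -, hy⟩; exact absurd hy (castSucc_ne_last y)
    · simp only [hF, Finset.mem_image, Finset.mem_filter, Finset.mem_univ, true_and]
      constructor
      · intro h; exact ⟨x, h, rfl⟩
      · rintro ⟨y, hy, hcast⟩
        rwa [← Fin.castSucc_injective m hcast]
  refine ⟨F, heq, ?_, ?_⟩
  · conv_rhs => rw [heq]
    rw [Finset.card_image_of_injective _ (Fin.castSucc_injective m)]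
  · intro a ha b hb hne
    have h := hS (Finset.mem_coe.2 ((Finset.mem_filter.1 (Finset.mem_coe.1 ha)).2))
      (Finset.mem_coe.2 ((Finset.mem_filter.1 (Finset.mem_coe.1 hb)).2))
      (fun hh => hne (Fin.castSucc_injective m hh))
    exact addS_adj_castSucc_castSucc.1 h

lemma degree_ge (hk : 0 < k) :
    ∀ {m : ℕ} {G : SimpleGraph (Fin m)}, IsKTree k G → k + 1 ≤ m → ∀ v, k ≤ G.degree v := by
  intro m G hG
  induction hG with
  | base => intro h; omega
  | @extend m' G' T hTcard hTclique hG' ih =>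
    intro hm v
    rcases fin_val_cases v with rfl | ⟨x, rfl⟩
    · rw [degree_addS_last, hTcard]
    · rw [degree_addS_castSucc]
      by_cases hm2 : k + 1 ≤ m'
      · have := ih hm2 x
        omega
      · have hm'k : m' = k := le_antisymm (by omega) (ktree_le_card hG')
        subst hm'k
        have hGtop : G' = ⊤ := ktree_eq_top hG' le_rfl
        have hTuniv : T = Finset.univ :=
          Finset.eq_univ_of_card _ (by rw [hTcard, Fintype.card_fin])
        rw [degree_of_eq_top hGtop x, hTuniv, if_pos (Finset.mem_univ x)]
        omega

def IsDom (G : SimpleGraph (Fin m)) (v : Fin m) : Prop := ∀ w, w ≠ v → G.Adj v w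

lemma isDom_of_degree {G : SimpleGraph (Fin m)} {v : Fin m} (h : G.degree v = m - 1) :
    IsDom G v := by
  intro w hw
  have hsub : G.neighborFinset v ⊆ Finset.univ.erase v := by
    intro u hu
    exact Finset.mem_erase.2 ⟨(G.ne_of_adj ((SimpleGraph.mem_neighborFinset _ _ _).1 hu)).symm,
      Finset.mem_univ u⟩
  have hcard : (Finset.univ.erase v).card ≤ (G.neighborFinset v).card := by
    rw [Finset.card_erase_of_mem (Finset.mem_univ v), Finset.card_univ, Fintype.card_fin]
    rw [SimpleGraph.degree] at h
    omega
  have := Finset.eq_of_subset_of_card_le hsub hcard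
  have hmem : w ∈ G.neighborFinset v := by
    rw [this]
    exact Finset.mem_erase.2 ⟨hw, Finset.mem_univ w⟩
  exact (SimpleGraph.mem_neighborFinset _ _ _).1 hmem

lemma clique_card_le : ∀ {m : ℕ} {G : SimpleGraph (Fin m)}, IsKTree k G →
    ∀ C : Finset (Fin m), G.IsClique ↑C → C.card ≤ k + 1 := by
  intro m G hG
  induction hG with
  | base =>
    intro C _
    have := Finset.card_le_univ C
    rw [Fintype.card_fin] at this
    omega
  | @extend m' G' T hTcard hTclique hG' ih =>
    intro C hC
    by_cases hlast : Fin.last m' ∈ C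
    · have hsub : C ⊆ insert (Fin.last m') (T.image Fin.castSucc) := by
        intro a ha
        rcases fin_val_cases a with rfl | ⟨x, rfl⟩
        · exact Finset.mem_insert_self _ _
        · refine Finset.mem_insert_of_mem (Finset.mem_image.2 ⟨x, ?_, rfl⟩)
          exact mem_T_of_clique hC hlast ha
      have h1 := Finset.card_le_card hsub
      have h2 := Finset.card_insert_le (Fin.last m') (T.image Fin.castSucc)
      have h3 := Finset.card_image_le (f := Fin.castSucc) (s := T)
      omega
    · obtain ⟨C₀, hCeq, hCcard, hCcl⟩ := pullback_clique hC hlast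
      have := ih C₀ hCcl
      omega

lemma dom_sdiff_card {G : SimpleGraph (Fin m)} (hG : IsKTree k G) {T : Finset (Fin m)}
    (hT : G.IsClique ↑T) (hTc : T.card = k) :
    ((Finset.univ.filter (fun v => G.degree v = m - 1)) \ T).card ≤ 1 := by
  classical
  set D := Finset.univ.filter (fun v => G.degree v = m - 1) with hD
  have hclique : G.IsClique ↑(T ∪ D) := by
    intro a ha b hb hne
    rcases Finset.mem_union.1 (Finset.mem_coe.1 ha) with haT | haD
    · rcases Finset.mem_union.1 (Finset.mem_coe.1 hb) with hbT | hbD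
      · exact hT (Finset.mem_coe.2 haT) (Finset.mem_coe.2 hbT) hne
      · exact ((isDom_of_degree (Finset.mem_filter.1 hbD).2) a hne).symm
    · exact (isDom_of_degree (Finset.mem_filter.1 haD).2) b (Ne.symm hne)
  have hcard := clique_card_le hG (T ∪ D) hclique
  have : T ∪ D = T ∪ (D \ T) := (Finset.union_sdiff_self_eq_union).symm
  rw [this, Finset.card_union_of_disjoint Finset.disjoint_sdiff] at hcard
  omega

lemma degree_lt_m {G : SimpleGraph (Fin m)} (v : Fin m) : G.degree v < m := by
  classical
  have := G.degree_lt_card_verts v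
  rwa [Fintype.card_fin] at this

lemma claimD (hk : 0 < k) :
    ∀ {m : ℕ} {G : SimpleGraph (Fin m)}, IsKTree k G →
    ∀ S : Finset (Fin m), G.IsClique ↑S → S.card = k →
    ∀ t, k ≤ t + 1 → t + 2 ≤ m →
    (S.filter (fun v => G.degree v ≤ t)).card + k ≤ t + 1 := by
  intro m G hG
  induction hG with
  | base => intro S hcl hcard t h1 h2; omega
  | @extend m' G' T hTcard hTclique hG' ih =>
    intro S hScl hScard t ht1 ht2
    by_cases hm' : m' ≤ k
    · have hm'k : m' = k := le_antisymm hm' (ktree_le_card hG')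
      subst hm'k
      have hGtop : G' = ⊤ := ktree_eq_top hG' le_rfl
      have hTuniv : T = Finset.univ :=
        Finset.eq_univ_of_card _ (by rw [hTcard, Fintype.card_fin])
      have hempty : S.filter (fun v => (addSimplicialVertex G' T).degree v ≤ t) = ∅ := by
        refine Finset.filter_eq_empty_iff.2 fun {v} hv => ?_
        rcases fin_val_cases v with rfl | ⟨x, rfl⟩
        · rw [degree_addS_last, hTcard]; omega
        · rw [degree_addS_castSucc, degree_of_eq_top hGtop x, hTuniv,
            if_pos (Finset.mem_univ x)]
          omega
      rw [hempty]
      simp only [Finset.card_empty]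
      omega
    · push_neg at hm'
      by_cases hlast : Fin.last m' ∈ S
      · by_cases htk : t < k
        · have hempty : S.filter (fun v => (addSimplicialVertex G' T).degree v ≤ t) = ∅ := by
            refine Finset.filter_eq_empty_iff.2 fun {v} hv => ?_
            rcases fin_val_cases v with rfl | ⟨x, rfl⟩
            · rw [degree_addS_last, hTcard]; omega
            · rw [degree_addS_castSucc]
              have := degree_ge hk hG' (by omega) x
              omega
          rw [hempty]
          simp only [Finset.card_empty]
          omega
        · push_neg at htk
          have hsub : (S.filter (fun v => (addSimplicialVertex G' T).degree v ≤ t)).erase (Fin.last m')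
              ⊆ (T.filter (fun y => G'.degree y ≤ t - 1)).image Fin.castSucc := by
            intro a ha
            obtain ⟨hane, haf⟩ := Finset.mem_erase.1 ha
            obtain ⟨haS, hadeg⟩ := Finset.mem_filter.1 haf
            rcases fin_val_cases a with rfl | ⟨x, rfl⟩
            · exact absurd rfl hane
            · have hxT : x ∈ T := mem_T_of_clique hScl hlast haS
              rw [degree_addS_castSucc, if_pos hxT] at hadeg
              exact Finset.mem_image.2 ⟨x, Finset.mem_filter.2 ⟨hxT, by omega⟩, rfl⟩
          have hIH := ih T hTclique hTcard (t-1) (by omega) (by omega)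
          have h1 : (S.filter (fun v => (addSimplicialVertex G' T).degree v ≤ t)).card ≤
              ((S.filter (fun v => (addSimplicialVertex G' T).degree v ≤ t)).erase (Fin.last m')).card + 1 := by
            by_cases hmem : Fin.last m' ∈ S.filter (fun v => (addSimplicialVertex G' T).degree v ≤ t)
            · rw [Finset.card_erase_of_mem hmem]
              have : 0 < (S.filter (fun v => (addSimplicialVertex G' T).degree v ≤ t)).card :=
                Finset.card_pos.2 ⟨_, hmem⟩
              omega
            · rw [Finset.erase_eq_of_notMem hmem]
              omega
          have h2' := Finset.card_le_card hsub
          have h3 := Finset.card_image_le (f := Fin.castSucc) (s := T.filter (fun y => G'.degree y ≤ t - 1))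
          omega
      · obtain ⟨S₀, hSeq, hScard₀, hScl₀⟩ := pullback_clique hScl hlast
        have himg : S.filter (fun v => (addSimplicialVertex G' T).degree v ≤ t)
            = (S₀.filter (fun y => G'.degree y + (if y ∈ T then 1 else 0) ≤ t)).image Fin.castSucc := by
          rw [hSeq, Finset.filter_image]
          congr 1
          refine Finset.filter_congr fun y _ => ?_
          rw [degree_addS_castSucc]
        rw [himg, Finset.card_image_of_injective _ (Fin.castSucc_injective m')]
        by_cases htt : t + 2 ≤ m'
        · have hsub : S₀.filter (fun y => G'.degree y + (if y ∈ T then 1 else 0) ≤ t)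
              ⊆ S₀.filter (fun y => G'.degree y ≤ t) := by
            intro y hy
            obtain ⟨hyS, hyd⟩ := Finset.mem_filter.1 hy
            refine Finset.mem_filter.2 ⟨hyS, ?_⟩
            by_cases hT : y ∈ T
            · rw [if_pos hT] at hyd; omega
            · rwa [if_neg hT, Nat.add_zero] at hyd
          have hIH := ih S₀ hScl₀ (by rw [hScard₀, hScard]) t ht1 htt
          have := Finset.card_le_card hsub
          omega
        · have hsub : S₀.filter (fun y => G'.degree y + (if y ∈ T then 1 else 0) ≤ t)
              ⊆ (S₀.filter (fun y => G'.degree y ≤ t - 1))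
                ∪ ((Finset.univ.filter (fun v => G'.degree v = m' - 1)) \ T) := by
            intro y hy
            obtain ⟨hyS, hyd⟩ := Finset.mem_filter.1 hy
            by_cases hcase : G'.degree y ≤ t - 1
            · exact Finset.mem_union_left _ (Finset.mem_filter.2 ⟨hyS, hcase⟩)
            · have hlt := degree_lt_m (G := G') y
              have hyT : y ∉ T := by
                intro hyT
                rw [if_pos hyT] at hyd
                omega
              refine Finset.mem_union_right _ (Finset.mem_sdiff.2 ⟨?_, hyT⟩)
              refine Finset.mem_filter.2 ⟨Finset.mem_univ y, ?_⟩
              omega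
          have hIH := ih S₀ hScl₀ (by rw [hScard₀, hScard]) (t-1) (by omega) (by omega)
          have hdom := dom_sdiff_card hG' hTclique hTcard
          have hc1 := Finset.card_le_card hsub
          have hc2 := Finset.card_union_le (S₀.filter (fun y => G'.degree y ≤ t - 1))
            ((Finset.univ.filter (fun v => G'.degree v = m' - 1)) \ T)
          omega

lemma prod_le_prod_eq {α : Type*} (s : Finset α) (f h : α → ℝ)
    (hpos : ∀ i ∈ s, 0 < f i) (hle : ∀ i ∈ s, f i ≤ h i) :
    s.prod f ≤ s.prod h ∧ (s.prod f = s.prod h → ∀ i ∈ s, f i = h i) := by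
  classical
  induction s using Finset.induction with
  | empty => simp
  | @insert a s ha ih =>
    have hfa := hpos a (Finset.mem_insert_self a s)
    have hha := hle a (Finset.mem_insert_self a s)
    have htail := ih (fun i hi => hpos i (Finset.mem_insert_of_mem hi))
      (fun i hi => hle i (Finset.mem_insert_of_mem hi))
    have hfp : 0 < s.prod f := Finset.prod_pos (fun i hi => hpos i (Finset.mem_insert_of_mem hi))
    rw [Finset.prod_insert ha, Finset.prod_insert ha]
    constructor
    · exact mul_le_mul hha htail.1 hfp.le (by linarith)
    · intro heq
      have h1 : f a = h a ∧ s.prod f = s.prod h := by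
        constructor <;> nlinarith [htail.1]
      intro i hi
      rcases Finset.mem_insert.1 hi with rfl | hi'
      · exact h1.1
      · exact htail.2 h1.2 i hi'

lemma forall₂_prod_pos : ∀ {l₁ l₂ : List ℝ},
    List.Forall₂ (fun a b => 0 < a ∧ a ≤ b) l₁ l₂ → 0 < l₁.prod := by
  intro l₁ l₂ h
  induction h with
  | nil => simp
  | cons hab htail ih => simpa using mul_pos hab.1 ih

lemma list_prod_le : ∀ {l₁ l₂ : List ℝ},
    List.Forall₂ (fun a b => 0 < a ∧ a ≤ b) l₁ l₂ →
    l₁.prod ≤ l₂.prod ∧ (l₁.prod = l₂.prod → l₁ = l₂) := by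
  intro l₁ l₂ h
  induction h with
  | nil => simp
  | @cons a b l₁' l₂' hab htail ih =>
    have hp₁ : 0 < l₁'.prod := forall₂_prod_pos htail
    simp only [List.prod_cons]
    constructor
    · exact mul_le_mul hab.2 ih.1 hp₁.le (by linarith [hab.1, hab.2])
    · intro heq
      have h1 : a = b ∧ l₁'.prod = l₂'.prod := by
        constructor <;> nlinarith [ih.1, hab.1, hab.2, hp₁]
      rw [h1.1, ih.2 h1.2]

lemma prod_gg_le_mu {S : Finset (Fin m)} {d : Fin m → ℕ} {μ : ℕ → ℕ}
    (hcard : S.card = k)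
    (hd1 : ∀ v ∈ S, 1 ≤ d v)
    (hμ1 : ∀ j, j < k → 1 ≤ μ j)
    (hμmono : ∀ i j, i ≤ j → j < k → μ i ≤ μ j)
    (hcount : ∀ t, (S.filter (fun v => d v ≤ t)).card
      ≤ ((Finset.range k).filter (fun j => μ j ≤ t)).card) :
    (∏ v ∈ S, gg (d v)) ≤ (∏ j ∈ Finset.range k, gg (μ j)) ∧
    ((∏ v ∈ S, gg (d v)) = (∏ j ∈ Finset.range k, gg (μ j)) →
      S.val.map d = (Multiset.range k).map μ) := by
  classical
  set M : Multiset ℕ := S.val.map d with hM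
  set l : List ℕ := Multiset.sort M (· ≤ ·) with hldef
  have hl : (l : Multiset ℕ) = M := Multiset.sort_eq _ _
  have hlen : l.length = k := by
    rw [hldef, Multiset.length_sort, hM, Multiset.card_map]
    exact hcard
  have hsorted : List.Pairwise (· ≤ ·) l := Multiset.pairwise_sort _ _
  have hmem1 : ∀ x ∈ l, 1 ≤ x := by
    intro x hx
    have : x ∈ M := by rw [← hl]; exact hx
    obtain ⟨v, hv, rfl⟩ := Multiset.mem_map.1 this
    exact hd1 v hv
  have hfiltercard : ∀ t : ℕ, Multiset.countP (fun x => x ≤ t) M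
      = (S.filter (fun v => d v ≤ t)).card := by
    intro t
    rw [hM, Multiset.countP_map]
    rfl
  have key : ∀ i : ℕ, ∀ hi : i < k, μ i ≤ l.get ⟨i, by omega⟩ := by
    intro i hi
    set t := l.get ⟨i, by omega⟩ with htdef
    have hcnt1 : i + 1 ≤ Multiset.countP (fun x => x ≤ t) M := by
      have hsub : ((l.take (i+1) : List ℕ) : Multiset ℕ) ≤ (l : Multiset ℕ) :=
        Multiset.coe_le.2 (l.take_sublist (i+1)).subperm
      have hall : ∀ x ∈ l.take (i+1), x ≤ t := by
        intro x hx
        obtain ⟨j, hj, rfl⟩ := List.mem_iff_getElem.1 hx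
        have hlt : (l.take (i+1)).length = min (i+1) l.length := List.length_take
        have hjlen : j < l.length := by omega
        rw [List.getElem_take]
        have hj2 : j ≤ i := by omega
        rcases Nat.lt_or_ge j i with hji | hji
        · exact List.pairwise_iff_getElem.1 hsorted j i hjlen (by omega) hji
        · have hji2 : j = i := by omega
          subst hji2
          exact le_of_eq (by rw [htdef]; simp [List.get_eq_getElem])
      have hcount_take : Multiset.countP (fun x => x ≤ t) (↑(l.take (i+1)) : Multiset ℕ)
          = i + 1 := by
        rw [Multiset.countP_eq_card.2 (by simpa using hall), Multiset.coe_card,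
          List.length_take]
        omega
      calc i + 1 = _ := hcount_take.symm
        _ ≤ _ := Multiset.countP_le_of_le _ hsub
        _ = _ := by rw [hl]
    by_contra hcon
    push_neg at hcon
    have hsubr : (Finset.range k).filter (fun j => μ j ≤ t) ⊆ Finset.range i := by
      intro j hj
      obtain ⟨hjk, hjt⟩ := Finset.mem_filter.1 hj
      rw [Finset.mem_range] at hjk ⊢
      by_contra hji
      push_neg at hji
      exact absurd (le_trans (hμmono i j hji hjk) hjt) (by omega)
    have hcc := Finset.card_le_card hsubr
    rw [Finset.card_range] at hcc
    have h2 := hcount t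
    rw [← hfiltercard t] at h2
    omega
  set L₁ : List ℝ := l.map gg with hL₁
  set L₂ : List ℝ := (List.range k).map (fun j => gg (μ j)) with hL₂
  have hlen₁ : L₁.length = k := by simp [hL₁, hlen]
  have hlen₂ : L₂.length = k := by simp [hL₂]
  have hf2 : List.Forall₂ (fun a b => 0 < a ∧ a ≤ b) L₁ L₂ := by
    rw [List.forall₂_iff_get]
    refine ⟨by omega, ?_⟩
    intro i h₁ h₂
    have hik : i < k := by omega
    have hil : i < l.length := by omega
    have e₁ : L₁.get ⟨i, h₁⟩ = gg (l.get ⟨i, hil⟩) := by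
      simp [hL₁, List.get_eq_getElem]
    have e₂ : L₂.get ⟨i, h₂⟩ = gg (μ i) := by
      simp [hL₂, List.get_eq_getElem]
    rw [e₁, e₂]
    have hmm : 1 ≤ l.get ⟨i, hil⟩ := hmem1 _ (List.get_mem l ⟨i, hil⟩)
    have hkey := key i hik
    constructor
    · exact gg_pos (by omega)
    · exact gg_anti (hμ1 i hik) hkey
  have hP₁ : (∏ v ∈ S, gg (d v)) = L₁.prod := by
    rw [Finset.prod_eq_multiset_prod]
    have : S.val.map (fun v => gg (d v)) = Multiset.map gg M := by
      rw [hM, Multiset.map_map]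
      rfl
    rw [this, ← hl, Multiset.map_coe, Multiset.prod_coe]
  have hP₂ : (∏ j ∈ Finset.range k, gg (μ j)) = L₂.prod := by
    rw [Finset.prod_eq_multiset_prod]
    have hrange : (Finset.range k).val = (Multiset.range k) := rfl
    rw [hrange]
    have : Multiset.range k = ((List.range k : List ℕ) : Multiset ℕ) := rfl
    rw [this, Multiset.map_coe, Multiset.prod_coe]
  have hmain := list_prod_le hf2
  constructor
  · rw [hP₁, hP₂]; exact hmain.1
  · intro heq
    rw [hP₁, hP₂] at heq
    have hLeq := hmain.2 heq
    -- recover l = (List.range k).map μ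
    have hl_eq : l = (List.range k).map μ := by
      apply List.ext_getElem
      · simp [hlen]
      · intro i hi₁ hi₂
        have hik : i < k := by omega
        have hgi := List.getElem_of_eq hLeq (show i < L₁.length by omega)
        simp only [hL₁, hL₂, List.getElem_map, List.getElem_range] at hgi
        have h1 : 1 ≤ l[i] := hmem1 _ (List.getElem_mem _)
        have h2 : 1 ≤ μ i := hμ1 i hik
        have hde := gg_inj (by omega) (by omega) hgi
        simpa [List.getElem_map, List.getElem_range] using hde
    show M = _
    calc M = ↑l := hl.symm
      _ = ↑((List.range k).map μ) := by rw [hl_eq]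
      _ = (Multiset.range k).map μ := (Multiset.map_coe μ (List.range k)).symm

lemma iso_degree {m m' : ℕ} {G : SimpleGraph (Fin m)} {H : SimpleGraph (Fin m')}
    (e : G ≃g H) (v : Fin m) : H.degree (e v) = G.degree v := by
  classical
  have himg : H.neighborFinset (e v) = (G.neighborFinset v).image e := by
    ext w
    simp only [SimpleGraph.mem_neighborFinset, Finset.mem_image]
    constructor
    · intro h
      refine ⟨e.symm w, ?_, by simp⟩
      have h2 : H.Adj (e v) (e (e.symm w)) := by simpa using h
      exact e.map_adj_iff.1 h2
    · rintro ⟨u, hu, rfl⟩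
      exact e.map_adj_iff.2 hu
  rw [SimpleGraph.degree, SimpleGraph.degree, himg]
  exact Finset.card_image_of_injective _ (RelIso.injective e)

lemma PR_iso_eq {G H : SimpleGraph (Fin m)} (e : G ≃g H) : PR G = PR H := by
  unfold PR
  rw [← Equiv.prod_comp e.toEquiv (fun w => (H.degree w : ℝ))]
  refine Finset.prod_congr rfl fun v _ => ?_
  exact_mod_cast (iso_degree e v).symm

lemma clique_image {G H : SimpleGraph (Fin m)} (e : G ≃g H) {S : Finset (Fin m)}
    (h : G.IsClique ↑S) : H.IsClique ↑(S.image e) := by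
  intro a ha b hb hne
  obtain ⟨x, hx, rfl⟩ := Finset.mem_image.1 (Finset.mem_coe.1 ha)
  obtain ⟨y, hy, rfl⟩ := Finset.mem_image.1 (Finset.mem_coe.1 hb)
  have hxy : x ≠ y := fun hh => hne (by rw [hh])
  exact e.map_adj_iff.2 (h (Finset.mem_coe.2 hx) (Finset.mem_coe.2 hy) hxy)

def addS_iso {G H : SimpleGraph (Fin m)} (e : G ≃g H) (S : Finset (Fin m)) :
    addSimplicialVertex G S ≃g addSimplicialVertex H (S.image e) := by
  classical
  refine ⟨finSuccEquivLast.trans ((Equiv.optionCongr e.toEquiv).trans finSuccEquivLast.symm), ?_⟩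
  intro a b
  rcases fin_val_cases a with rfl | ⟨x, rfl⟩ <;> rcases fin_val_cases b with rfl | ⟨y, rfl⟩
  · simp only [Equiv.trans_apply, finSuccEquivLast_last, Equiv.optionCongr_apply,
      Option.map_none, finSuccEquivLast_symm_none]
    constructor
    · intro h; exact absurd rfl h.ne
    · intro h; exact absurd rfl h.ne
  · simp only [Equiv.trans_apply, finSuccEquivLast_last, finSuccEquivLast_castSucc,
      Equiv.optionCongr_apply, Option.map_none, Option.map_some, finSuccEquivLast_symm_none,
      finSuccEquivLast_symm_some]
    rw [addS_adj_last_castSucc, addS_adj_last_castSucc]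
    constructor
    · intro h
      obtain ⟨u, hu, heq⟩ := Finset.mem_image.1 h
      rwa [← e.toEquiv.injective heq]
    · intro h
      exact Finset.mem_image_of_mem ⇑e h
  · simp only [Equiv.trans_apply, finSuccEquivLast_last, finSuccEquivLast_castSucc,
      Equiv.optionCongr_apply, Option.map_none, Option.map_some, finSuccEquivLast_symm_none,
      finSuccEquivLast_symm_some]
    rw [(addSimplicialVertex H _).adj_comm, (addSimplicialVertex G S).adj_comm,
      addS_adj_last_castSucc, addS_adj_last_castSucc]
    constructor
    · intro h
      obtain ⟨u, hu, heq⟩ := Finset.mem_image.1 h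
      rwa [← e.toEquiv.injective heq]
    · intro h
      exact Finset.mem_image_of_mem ⇑e h
  · simp only [Equiv.trans_apply, finSuccEquivLast_castSucc, Equiv.optionCongr_apply,
      Option.map_some, finSuccEquivLast_symm_some]
    rw [addS_adj_castSucc_castSucc, addS_adj_castSucc_castSucc]
    exact e.map_adj_iff

lemma exists_swap_perm {α : Type*} [DecidableEq α] (A B : Finset α)
    (hd : Disjoint A B) (hc : A.card = B.card) :
    ∃ σ : Equiv.Perm α, (∀ x ∈ A, σ x ∈ B) ∧ (∀ x, x ∉ A → x ∉ B → σ x = x) := by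
  classical
  let e := Finset.equivOfCardEq hc
  let f : α → α := fun x =>
    if hx : x ∈ A then (e ⟨x, hx⟩ : α) else if hx : x ∈ B then ((e.symm ⟨x, hx⟩ : α)) else x
  have hfA : ∀ x (hx : x ∈ A), f x = (e ⟨x, hx⟩ : α) := fun x hx => dif_pos hx
  have hfB : ∀ x (hxA : x ∉ A) (hx : x ∈ B), f x = (e.symm ⟨x, hx⟩ : α) := fun x hxA hx => by
    simp only [f, dif_neg hxA, dif_pos hx]
  have hfO : ∀ x, x ∉ A → x ∉ B → f x = x := fun x hxA hxB => by
    simp only [f, dif_neg hxA, dif_neg hxB]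
  have hinv : Function.Involutive f := by
    intro x
    by_cases hx : x ∈ A
    · rw [hfA x hx]
      have hB : (e ⟨x, hx⟩ : α) ∈ B := (e ⟨x, hx⟩).2
      have hA : (e ⟨x, hx⟩ : α) ∉ A := fun h => (Finset.disjoint_left.1 hd h) hB
      rw [hfB _ hA hB]
      have hsub : (⟨(e ⟨x, hx⟩ : α), hB⟩ : {y // y ∈ B}) = e ⟨x, hx⟩ := Subtype.ext rfl
      rw [hsub, Equiv.symm_apply_apply]
    · by_cases hxB : x ∈ B
      · rw [hfB x hx hxB]
        have hA : (e.symm ⟨x, hxB⟩ : α) ∈ A := (e.symm ⟨x, hxB⟩).2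
        rw [hfA _ hA]
        have hsub : (⟨(e.symm ⟨x, hxB⟩ : α), hA⟩ : {y // y ∈ A}) = e.symm ⟨x, hxB⟩ :=
          Subtype.ext rfl
        rw [hsub, Equiv.apply_symm_apply]
      · rw [hfO x hx hxB, hfO x hx hxB]
  refine ⟨hinv.toPerm f, ?_, ?_⟩
  · intro x hx
    show f x ∈ B
    rw [hfA x hx]
    exact (e ⟨x, hx⟩).2
  · intro x hxA hxB
    show f x = x
    exact hfO x hxA hxB

lemma image_eq_of_swap {α : Type*} [DecidableEq α] {X W : Finset α} (σ : Equiv.Perm α)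
    (hcard : X.card = W.card)
    (hmap : ∀ x ∈ X \ W, σ x ∈ W \ X) (hfix : ∀ x, x ∉ X \ W → x ∉ W \ X → σ x = x) :
    X.image σ = W := by
  classical
  have h1 : (X \ W).card + (X ∩ W).card = X.card := by
    rw [← Finset.card_union_of_disjoint (Finset.disjoint_sdiff_inter X W),
      Finset.sdiff_union_inter]
  have h2 : (W \ X).card + (W ∩ X).card = W.card := by
    rw [← Finset.card_union_of_disjoint (Finset.disjoint_sdiff_inter W X),
      Finset.sdiff_union_inter]
  have hint : (X ∩ W).card = (W ∩ X).card := by rw [Finset.inter_comm]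
  have hAB : (X \ W).card = (W \ X).card := by omega
  have himg1 : (X \ W).image σ = W \ X := by
    apply Finset.eq_of_subset_of_card_le
    · intro y hy
      obtain ⟨x, hx, rfl⟩ := Finset.mem_image.1 hy
      exact hmap x hx
    · rw [Finset.card_image_of_injective _ σ.injective]
      omega
  have himg2 : (X ∩ W).image σ = X ∩ W := by
    have heqon : ∀ x ∈ X ∩ W, σ x = x := by
      intro x hx
      obtain ⟨hx1, hx2⟩ := Finset.mem_inter.1 hx
      exact hfix x (fun h => (Finset.mem_sdiff.1 h).2 hx2) (fun h => (Finset.mem_sdiff.1 h).2 hx1)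
    rw [show (X ∩ W).image ⇑σ = (X ∩ W).image id from
      Finset.image_congr (fun x hx => heqon x hx), Finset.image_id]
  calc X.image σ = ((X \ W) ∪ (X ∩ W)).image σ := by rw [Finset.sdiff_union_inter]
    _ = (W \ X) ∪ (X ∩ W) := by rw [Finset.image_union, himg1, himg2]
    _ = W := by rw [Finset.inter_comm, Finset.sdiff_union_inter]

lemma adj_of_isDom {G : SimpleGraph (Fin m)} {v : Fin m} (h : IsDom G v) {w : Fin m}
    (hw : w ≠ v) : G.Adj v w := h w hw

lemma perm_adj_of_fix_nondom {G : SimpleGraph (Fin m)} (σ : Equiv.Perm (Fin m))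
    (hfix : ∀ x, ¬ IsDom G x → σ x = x) : ∀ a b, G.Adj (σ a) (σ b) ↔ G.Adj a b := by
  have aux : ∀ (τ : Equiv.Perm (Fin m)), (∀ x, ¬ IsDom G x → τ x = x) →
      ∀ a b, G.Adj a b → G.Adj (τ a) (τ b) := by
    intro τ hτ a b hab
    by_cases hda : IsDom G a
    · have hdτa : IsDom G (τ a) := by
        by_contra hnd
        have h1 : τ (τ a) = τ a := hτ _ hnd
        have h2 : τ a = a := τ.injective h1
        rw [h2] at hnd
        exact hnd hda
      exact hdτa (τ b) (fun hh => hab.ne (τ.injective hh).symm)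
    · by_cases hdb : IsDom G b
      · have hdτb : IsDom G (τ b) := by
          by_contra hnd
          have h1 : τ (τ b) = τ b := hτ _ hnd
          have h2 : τ b = b := τ.injective h1
          rw [h2] at hnd
          exact hnd hdb
        exact (hdτb (τ a) (fun hh => hab.ne (τ.injective hh))).symm
      · rw [hτ a hda, hτ b hdb]
        exact hab
  intro a b
  constructor
  · intro h
    have hfix' : ∀ x, ¬ IsDom G x → σ.symm x = x := by
      intro x hx
      conv_lhs => rw [← hfix x hx]
      exact σ.symm_apply_apply x
    have := aux σ.symm hfix' _ _ h
    simpa using this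
  · exact aux σ hfix a b

noncomputable def domIso {G : SimpleGraph (Fin m)} (σ : Equiv.Perm (Fin m))
    (hfix : ∀ x, ¬ IsDom G x → σ x = x) : G ≃g G :=
  ⟨σ, by intro a b; exact perm_adj_of_fix_nondom σ hfix a b⟩

def kPathRev (m k : ℕ) : kPath m k ≃g kPath m k := by
  refine ⟨Fin.revPerm, ?_⟩
  intro a b
  rw [kPath_adj, kPath_adj]
  simp only [Fin.revPerm_apply]
  have ha := a.isLt
  have hb := b.isLt
  have hra : (a.rev : ℕ) = m - 1 - a.val := by rw [Fin.val_rev]; omega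
  have hrb : (b.rev : ℕ) = m - 1 - b.val := by rw [Fin.val_rev]; omega
  constructor
  · rintro ⟨h1, h2, h3⟩
    rw [hra, hrb] at h2 h3
    exact ⟨fun hh => h1 (by rw [hh]), by omega, by omega⟩
  · rintro ⟨h1, h2, h3⟩
    refine ⟨fun hh => h1 (Fin.rev_injective hh), ?_, ?_⟩ <;> rw [hra, hrb] <;> omega
lemma deg_kPath_rev (v : Fin m) :
    (kPath m k).degree (Fin.rev v) = (kPath m k).degree v := by
  rw [degree_kPath, degree_kPath]
  have h1 := v.isLt
  have h2 : ((Fin.rev v) : ℕ) = m - 1 - v.val := by rw [Fin.val_rev]; omega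
  rw [h2]
  omega

lemma path_clique_right (hk : 0 < k) (hm : k + 1 ≤ m) (S' : Finset (Fin m))
    (hcard : S'.card = k)
    (hdeg : S'.val.map (fun v => (kPath m k).degree v)
      = (Multiset.range k).map (fun j => min (k + j) (m - 1)))
    (hR : ∀ t (ht : t < min (m - 1 - k) k), (⟨m - 1 - t, by omega⟩ : Fin m) ∈ S')
    (hL : ∀ t (ht : t < min (m - 1 - k) k), (⟨t, by omega⟩ : Fin m) ∉ S') :
    ∃ τ : kPath m k ≃g kPath m k, S'.image ⇑τ = Wend m k := by
  classical
  have hcardW : (Wend m k).card = k := card_Wend (by omega)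
  have hdomA : ∀ v ∈ S' \ Wend m k, (kPath m k).degree v = m - 1 := by
    intro v hv
    obtain ⟨hvS, hvW⟩ := Finset.mem_sdiff.1 hv
    rw [mem_Wend] at hvW
    have hmem : (kPath m k).degree v ∈ S'.val.map (fun v => (kPath m k).degree v) :=
      Multiset.mem_map_of_mem _ hvS
    rw [hdeg] at hmem
    obtain ⟨j, hj, hdj⟩ := Multiset.mem_map.1 hmem
    rw [Multiset.mem_range] at hj
    by_cases hjd : k + j ≤ m - 2
    · exfalso
      have hjq : j < min (m - 1 - k) k := by omega
      have hdv : (kPath m k).degree v = k + j := by omega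
      rw [degree_kPath] at hdv
      have hvlt := v.isLt
      have hval : v.val = j ∨ v.val = m - 1 - j := by omega
      rcases hval with hval | hval
      · exact hL j hjq (by rwa [show (⟨j, by omega⟩ : Fin m) = v from Fin.ext hval.symm])
      · omega
    · rw [← hdj]
      omega
  have hdomB : ∀ v ∈ Wend m k \ S', (kPath m k).degree v = m - 1 := by
    intro v hv
    obtain ⟨hvW, hvS⟩ := Finset.mem_sdiff.1 hv
    rw [mem_Wend] at hvW
    have hvlt := v.isLt
    by_cases htq : m - 1 - v.val < min (m - 1 - k) k
    · exfalso
      have hmm := hR (m - 1 - v.val) htq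
      have hvt : (⟨m - 1 - (m - 1 - v.val), by omega⟩ : Fin m) = v := Fin.ext (by
        show m - 1 - (m - 1 - v.val) = v.val
        omega)
      rw [hvt] at hmm
      exact hvS hmm
    · rw [degree_kPath]
      omega
  have hdisj : Disjoint (S' \ Wend m k) (Wend m k \ S') := by
    rw [Finset.disjoint_left]
    intro x hx hxB
    exact (Finset.mem_sdiff.1 hx).2 (Finset.mem_sdiff.1 hxB).1
  have hABcard : (S' \ Wend m k).card = (Wend m k \ S').card := by
    have h1 : (S' \ Wend m k).card + (S' ∩ Wend m k).card = S'.card := by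
      rw [← Finset.card_union_of_disjoint (Finset.disjoint_sdiff_inter S' (Wend m k)),
        Finset.sdiff_union_inter]
    have h2 : (Wend m k \ S').card + (Wend m k ∩ S').card = (Wend m k).card := by
      rw [← Finset.card_union_of_disjoint (Finset.disjoint_sdiff_inter (Wend m k) S'),
        Finset.sdiff_union_inter]
    have h3 : (S' ∩ Wend m k).card = (Wend m k ∩ S').card := by rw [Finset.inter_comm]
    omega
  obtain ⟨σ, hσ1, hσ2⟩ := exists_swap_perm _ _ hdisj hABcard
  have hfix : ∀ x, ¬ IsDom (kPath m k) x → σ x = x := by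
    intro x hx
    apply hσ2
    · intro hxA; exact hx (isDom_of_degree (hdomA x hxA))
    · intro hxB; exact hx (isDom_of_degree (hdomB x hxB))
  refine ⟨domIso σ hfix, ?_⟩
  show S'.image ⇑σ = Wend m k
  exact image_eq_of_swap σ (by rw [hcard, hcardW]) hσ1 hσ2

lemma path_extremal_clique (hk : 0 < k) (hm : k + 1 ≤ m) (S' : Finset (Fin m))
    (hcl : (kPath m k).IsClique ↑S') (hcard : S'.card = k)
    (hdeg : S'.val.map (fun v => (kPath m k).degree v)
      = (Multiset.range k).map (fun j => min (k + j) (m - 1))) :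
    ∃ τ : kPath m k ≃g kPath m k, S'.image ⇑τ = Wend m k := by
  classical
  have hcnt : ∀ t (ht : t < min (m - 1 - k) k),
      (S'.filter (fun v => (kPath m k).degree v = k + t)).card = 1 := by
    intro t ht
    have h1 : Multiset.countP (fun x => x = k + t)
        (S'.val.map (fun v => (kPath m k).degree v))
        = (S'.filter (fun v => (kPath m k).degree v = k + t)).card := by
      rw [Multiset.countP_map]
      rfl
    have h2 : Multiset.countP (fun x => x = k + t)
        ((Multiset.range k).map (fun j => min (k + j) (m - 1)))
        = ((Finset.range k).filter (fun j => min (k + j) (m - 1) = k + t)).card := by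
      rw [Multiset.countP_map]
      rfl
    have h3 : (Finset.range k).filter (fun j => min (k + j) (m - 1) = k + t) = {t} := by
      ext j
      simp only [Finset.mem_filter, Finset.mem_range, Finset.mem_singleton]
      omega
    rw [hdeg, h2, h3] at h1
    rw [← h1, Finset.card_singleton]
  have hpair : ∀ t (ht : t < min (m - 1 - k) k),
      ((⟨t, by omega⟩ : Fin m) ∈ S' ↔ ¬ ((⟨m - 1 - t, by omega⟩ : Fin m) ∈ S')) := by
    intro t ht
    have hd1 : (kPath m k).degree ⟨t, by omega⟩ = k + t := by
      rw [degree_kPath]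
      show min t k + min (m - 1 - t) k = k + t
      omega
    have hd2 : (kPath m k).degree ⟨m - 1 - t, by omega⟩ = k + t := by
      rw [degree_kPath]
      show min (m - 1 - t) k + min (m - 1 - (m - 1 - t)) k = k + t
      omega
    have hne : (⟨t, by omega⟩ : Fin m) ≠ ⟨m - 1 - t, by omega⟩ := by
      simp only [ne_eq, Fin.mk.injEq]
      omega
    constructor
    · intro h1 h2
      have hsub : ({(⟨t, by omega⟩ : Fin m), ⟨m - 1 - t, by omega⟩} : Finset (Fin m))
          ⊆ S'.filter (fun v => (kPath m k).degree v = k + t) := by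
        intro v hv
        rcases Finset.mem_insert.1 hv with rfl | hv'
        · exact Finset.mem_filter.2 ⟨h1, hd1⟩
        · rw [Finset.mem_singleton.1 hv']
          exact Finset.mem_filter.2 ⟨h2, hd2⟩
      have hc2 := Finset.card_le_card hsub
      rw [Finset.card_pair hne, hcnt t ht] at hc2
      omega
    · intro hnot
      obtain ⟨v, hv⟩ := Finset.card_eq_one.1 (hcnt t ht)
      have hvmem : v ∈ S'.filter (fun v => (kPath m k).degree v = k + t) := by
        rw [hv]; exact Finset.mem_singleton_self v
      obtain ⟨hvS, hvd⟩ := Finset.mem_filter.1 hvmem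
      have hvlt := v.isLt
      rw [degree_kPath] at hvd
      have : v.val = t ∨ v.val = m - 1 - t := by omega
      rcases this with hval | hval
      · rwa [show (⟨t, by omega⟩ : Fin m) = v from Fin.ext hval.symm]
      · exact absurd (by rwa [show (⟨m - 1 - t, by omega⟩ : Fin m) = v from Fin.ext hval.symm])
          hnot
  have hAdjle : ∀ a b : Fin m, a ∈ S' → b ∈ S' → a ≠ b → b.val ≤ a.val + k := by
    intro a b ha hb hne
    have := hcl (Finset.mem_coe.2 ha) (Finset.mem_coe.2 hb) hne
    exact (kPath_adj.1 this).2.2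
  by_cases h0 : ∃ h00 : 0 < min (m - 1 - k) k, (⟨0, by omega⟩ : Fin m) ∈ S'
  · obtain ⟨h00, h0mem⟩ := h0
    have hLfull : ∀ t (ht : t < min (m - 1 - k) k), (⟨t, by omega⟩ : Fin m) ∈ S' := by
      intro t ht
      by_contra hnot
      have hright : (⟨m - 1 - t, by omega⟩ : Fin m) ∈ S' := by
        by_contra hno
        exact hnot ((hpair t ht).2 hno)
      have hne0 : (⟨0, by omega⟩ : Fin m) ≠ ⟨m - 1 - t, by omega⟩ := by
        simp only [ne_eq, Fin.mk.injEq]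
        omega
      have hadj := hAdjle _ _ h0mem hright hne0
      have hadj2 : m - 1 - t ≤ 0 + k := hadj
      omega
    have hrevval : ∀ v : Fin m, ((kPathRev m k) v).val = m - 1 - v.val := by
      intro v
      show (Fin.rev v).val = m - 1 - v.val
      rw [Fin.val_rev]
      have := v.isLt
      omega
    have hinj : Function.Injective ⇑(kPathRev m k) := RelIso.injective _
    have hcard'' : (S'.image ⇑(kPathRev m k)).card = k := by
      rw [Finset.card_image_of_injective _ hinj, hcard]
    have hdeg'' : (S'.image ⇑(kPathRev m k)).val.map (fun v => (kPath m k).degree v)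
        = (Multiset.range k).map (fun j => min (k + j) (m - 1)) := by
      rw [Finset.image_val_of_injOn (hinj.injOn), Multiset.map_map]
      rw [← hdeg]
      congr 1
      funext v
      show (kPath m k).degree (Fin.rev v) = _
      exact deg_kPath_rev v
    have hR'' : ∀ t (ht : t < min (m - 1 - k) k),
        (⟨m - 1 - t, by omega⟩ : Fin m) ∈ S'.image ⇑(kPathRev m k) := by
      intro t ht
      rw [Finset.mem_image]
      refine ⟨⟨t, by omega⟩, hLfull t ht, ?_⟩
      apply Fin.ext
      rw [hrevval]
    have hL'' : ∀ t (ht : t < min (m - 1 - k) k),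
        (⟨t, by omega⟩ : Fin m) ∉ S'.image ⇑(kPathRev m k) := by
      intro t ht hmem
      rw [Finset.mem_image] at hmem
      obtain ⟨u, hu, huv⟩ := hmem
      have huval : m - 1 - u.val = t := by
        have := congrArg Fin.val huv
        rwa [hrevval] at this
      have hu2 : u = ⟨m - 1 - t, by omega⟩ := by
        apply Fin.ext
        have := u.isLt
        show u.val = m - 1 - t
        omega
      rw [hu2] at hu
      exact ((hpair t ht).1 (hLfull t ht)) hu
    obtain ⟨τ₀, hτ₀⟩ := path_clique_right hk hm _ hcard'' hdeg'' hR'' hL''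
    refine ⟨(kPathRev m k).trans τ₀, ?_⟩
    have himim : S'.image ⇑((kPathRev m k).trans τ₀)
        = (S'.image ⇑(kPathRev m k)).image ⇑τ₀ := by
      rw [Finset.image_image]
      rfl
    rw [himim, hτ₀]
  · push_neg at h0
    have hL' : ∀ t (ht : t < min (m - 1 - k) k), (⟨t, by omega⟩ : Fin m) ∉ S' := by
      intro t ht hmem
      have h00 : 0 < min (m - 1 - k) k := by omega
      have h0S := h0 h00
      have hm1 : (⟨m - 1 - 0, by omega⟩ : Fin m) ∈ S' := by
        by_contra hno
        exact h0S ((hpair 0 h00).2 hno)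
      by_cases ht0 : t = 0
      · subst ht0
        exact h0S hmem
      · have hne0 : (⟨t, by omega⟩ : Fin m) ≠ ⟨m - 1 - 0, by omega⟩ := by
          simp only [ne_eq, Fin.mk.injEq]
          omega
        have hadj := hAdjle _ _ hmem hm1 hne0
        have hadj2 : m - 1 - 0 ≤ t + k := hadj
        omega
    have hR' : ∀ t (ht : t < min (m - 1 - k) k), (⟨m - 1 - t, by omega⟩ : Fin m) ∈ S' := by
      intro t ht
      by_contra hno
      exact hL' t ht ((hpair t ht).2 hno)
    exact path_clique_right hk hm S' hcard hdeg hR' hL'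

lemma factor_eq {a b c d : ℝ} (hab : a ≤ b) (hcd : c ≤ d) (ha : 0 < a) (hc : 0 < c)
    (heq : b * d = a * c) : b = a ∧ d = c := by
  have hd : 0 < d := lt_of_lt_of_le hc hcd
  have hba : b ≤ a := by nlinarith [mul_le_mul_of_nonneg_left hcd ha.le]
  have h1 : b = a := le_antisymm hba hab
  have h2 : d = c := by
    apply mul_left_cancel₀ ha.ne'
    rw [h1] at heq
    exact heq
  exact ⟨h1, h2⟩

lemma star_extremal_clique (hk : 0 < k) (hm : k + 1 ≤ m) (S' : Finset (Fin m))
    (hcard : S'.card = k)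
    (hdomS : ∀ v ∈ S', (kStar m k).degree v = m - 1) :
    ∃ τ : kStar m k ≃g kStar m k, S'.image ⇑τ = Ck m k := by
  classical
  have hcardC : (Ck m k).card = k := card_Ck (by omega)
  have hdomA : ∀ v ∈ S' \ Ck m k, (kStar m k).degree v = m - 1 := by
    intro v hv
    exact hdomS v (Finset.mem_sdiff.1 hv).1
  have hdomB : ∀ v ∈ Ck m k \ S', (kStar m k).degree v = m - 1 := by
    intro v hv
    have := mem_Ck.1 (Finset.mem_sdiff.1 hv).1
    rw [degree_kStar (by omega), if_pos this]
  have hdisj : Disjoint (S' \ Ck m k) (Ck m k \ S') := by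
    rw [Finset.disjoint_left]
    intro x hx hxB
    exact (Finset.mem_sdiff.1 hx).2 (Finset.mem_sdiff.1 hxB).1
  have hABcard : (S' \ Ck m k).card = (Ck m k \ S').card := by
    have h1 : (S' \ Ck m k).card + (S' ∩ Ck m k).card = S'.card := by
      rw [← Finset.card_union_of_disjoint (Finset.disjoint_sdiff_inter S' (Ck m k)),
        Finset.sdiff_union_inter]
    have h2 : (Ck m k \ S').card + (Ck m k ∩ S').card = (Ck m k).card := by
      rw [← Finset.card_union_of_disjoint (Finset.disjoint_sdiff_inter (Ck m k) S'),
        Finset.sdiff_union_inter]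
    have h3 : (S' ∩ Ck m k).card = (Ck m k ∩ S').card := by rw [Finset.inter_comm]
    omega
  obtain ⟨σ, hσ1, hσ2⟩ := exists_swap_perm _ _ hdisj hABcard
  have hfix : ∀ x, ¬ IsDom (kStar m k) x → σ x = x := by
    intro x hx
    apply hσ2
    · intro hxA; exact hx (isDom_of_degree (hdomA x hxA))
    · intro hxB; exact hx (isDom_of_degree (hdomB x hxB))
  refine ⟨domIso σ hfix, ?_⟩
  show S'.image ⇑σ = Ck m k
  exact image_eq_of_swap σ (by rw [hcard, hcardC]) hσ1 hσ2

theorem mainPR (hk : 0 < k) : ∀ {n : ℕ} {G : SimpleGraph (Fin n)}, IsKTree k G →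
    ((PR (kStar n k) ≤ PR G ∧ PR G ≤ PR (kPath n k)) ∧
    (PR G = PR (kStar n k) ↔ Nonempty (G ≃g kStar n k)) ∧
    (PR G = PR (kPath n k) ↔ Nonempty (G ≃g kPath n k))) := by
  intro n G hG
  induction hG with
  | base =>
    rw [kStar_eq_top, kPath_eq_top]
    refine ⟨⟨le_rfl, le_rfl⟩, ?_, ?_⟩ <;>
      exact ⟨fun _ => ⟨RelIso.refl _⟩, fun _ => rfl⟩
  | @extend m G' T hTcard hTclique hG' ih =>
    by_cases hm' : m ≤ k
    · -- m = k : everything is complete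
      have hmk : m = k := le_antisymm hm' (ktree_le_card hG')
      subst hmk
      have hGtop : G' = ⊤ := ktree_eq_top hG' le_rfl
      have hTuniv : T = Finset.univ :=
        Finset.eq_univ_of_card _ (by rw [hTcard, Fintype.card_fin])
      have hCk : Ck m m = Finset.univ := by
        ext v
        simp only [mem_Ck, Finset.mem_univ, iff_true]
        exact v.isLt
      have hWe : Wend m m = Finset.univ := by
        ext v
        simp only [mem_Wend, Finset.mem_univ, iff_true]
        omega
      have e1 : addSimplicialVertex G' T = kStar (m+1) m := by
        rw [hGtop, hTuniv, ← kStar_eq_top, ← hCk]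
        exact addS_kStar le_rfl
      have e2 : addSimplicialVertex G' T = kPath (m+1) m := by
        rw [hGtop, hTuniv, ← kPath_eq_top, ← hWe]
        exact addS_kPath le_rfl
      rw [e1]
      rw [show kPath (m+1) m = kStar (m+1) m from e2.symm.trans e1]
      refine ⟨⟨le_rfl, le_rfl⟩, ?_, ?_⟩ <;>
        exact ⟨fun _ => ⟨RelIso.refl _⟩, fun _ => rfl⟩
    · push_neg at hm'
      -- k + 1 ≤ m
      have hm1 : k + 1 ≤ m := hm'
      have hdeg' : ∀ v, k ≤ G'.degree v := degree_ge hk hG' hm1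
      have hdpos : ∀ v ∈ T, 0 < G'.degree v := fun v _ => lt_of_lt_of_le hk (hdeg' v)
      have hPRG : PR (addSimplicialVertex G' T)
          = (k : ℝ) * (∏ v ∈ T, gg (G'.degree v)) * PR G' := by
        rw [PR_addS' hdpos, hTcard]
      have hPRG'pos : 0 < PR G' := by
        refine Finset.prod_pos fun v _ => ?_
        exact_mod_cast lt_of_lt_of_le hk (hdeg' v)
      -- star facts
      have hCkcard : (Ck m k).card = k := card_Ck (by omega)
      have hstarpos : ∀ v : Fin m, 0 < (kStar m k).degree v := by
        intro v
        rw [degree_kStar (by omega)]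
        split <;> omega
      have hPRstarpos : 0 < PR (kStar m k) := by
        refine Finset.prod_pos fun v _ => ?_
        exact_mod_cast hstarpos v
      have hstarprod : ∏ v ∈ Ck m k, gg ((kStar m k).degree v) = gg (m-1) ^ k := by
        rw [Finset.prod_congr rfl (fun v hv => by
          rw [degree_kStar (by omega : k ≤ m), if_pos (mem_Ck.1 hv)]),
          Finset.prod_const, hCkcard]
      have hPRstar : PR (kStar (m+1) k)
          = (k : ℝ) * (gg (m-1) ^ k) * PR (kStar m k) := by
        rw [← addS_kStar (by omega : k ≤ m), PR_addS' (fun v _ => hstarpos v), hCkcard,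
          hstarprod]
      have hggpos : 0 < gg (m-1) := gg_pos (by omega)
      have hlow := prod_le_prod_eq T (fun _ => gg (m-1)) (fun v => gg (G'.degree v))
        (fun v _ => hggpos)
        (fun v hv => gg_anti (hdpos v hv) (by have := degree_lt_m (G := G') v; omega))
      rw [Finset.prod_const, hTcard] at hlow
      -- path facts
      have hpathpos : ∀ v : Fin m, 0 < (kPath m k).degree v := by
        intro v
        rw [degree_kPath]
        have := v.isLt
        omega
      have hPRpathpos : 0 < PR (kPath m k) := by
        refine Finset.prod_pos fun v _ => ?_
        exact_mod_cast hpathpos v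
      have hWcard : (Wend m k).card = k := card_Wend (by omega)
      have hWdeg : ∏ v ∈ Wend m k, gg ((kPath m k).degree v)
          = ∏ j ∈ Finset.range k, gg (min (k + j) (m - 1)) := by
        refine (Finset.prod_bij (fun j hj => (⟨m - 1 - j, by
          have := Finset.mem_range.1 hj; omega⟩ : Fin m)) ?_ ?_ ?_ ?_).symm
        · intro j hj
          have := Finset.mem_range.1 hj
          rw [mem_Wend]
          show m ≤ m - 1 - j + k
          omega
        · intro a ha b hb hab
          have ha' := Finset.mem_range.1 ha
          have hb' := Finset.mem_range.1 hb
          have := congrArg Fin.val hab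
          simp only at this
          omega
        · intro v hv
          have hvW := mem_Wend.1 hv
          have hvlt := v.isLt
          refine ⟨m - 1 - v.val, Finset.mem_range.2 (by omega), ?_⟩
          apply Fin.ext
          show m - 1 - (m - 1 - v.val) = v.val
          omega
        · intro j hj
          have hjk := Finset.mem_range.1 hj
          congr 1
          rw [degree_kPath]
          show min (k + j) (m - 1) = min (m - 1 - j) k + min (m - 1 - (m - 1 - j)) k
          omega
      have hPRpath : PR (kPath (m+1) k)
          = (k : ℝ) * (∏ j ∈ Finset.range k, gg (min (k + j) (m - 1))) * PR (kPath m k) := by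
        rw [← addS_kPath (by omega : k ≤ m), PR_addS' (fun v _ => hpathpos v), hWcard, hWdeg]
      have hcount : ∀ t, (T.filter (fun v => G'.degree v ≤ t)).card
          ≤ ((Finset.range k).filter (fun j => min (k + j) (m - 1) ≤ t)).card := by
        intro t
        by_cases h1 : t < k
        · have : T.filter (fun v => G'.degree v ≤ t) = ∅ := by
            refine Finset.filter_eq_empty_iff.2 fun {v} hv => ?_
            have := hdeg' v
            omega
          rw [this]
          simp
        · push_neg at h1
          by_cases h2 : t ≤ m - 2
          · have hD := claimD hk hG' T hTclique hTcard t (by omega) (by omega)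
            have hle2 : (T.filter (fun v => G'.degree v ≤ t)).card ≤ T.card :=
              Finset.card_filter_le _ _
            have hrhs : (Finset.range k).filter (fun j => min (k + j) (m - 1) ≤ t)
                = Finset.range (min (t + 1 - k) k) := by
              ext j
              simp only [Finset.mem_filter, Finset.mem_range]
              omega
            rw [hrhs, Finset.card_range]
            rw [hTcard] at hle2
            omega
          · have hrhs : (Finset.range k).filter (fun j => min (k + j) (m - 1) ≤ t)
                = Finset.range k := by
              ext j
              simp only [Finset.mem_filter, Finset.mem_range]
              omega
            rw [hrhs, Finset.card_range]
            have hle2 : (T.filter (fun v => G'.degree v ≤ t)).card ≤ T.card :=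
              Finset.card_filter_le _ _
            rw [hTcard] at hle2
            exact hle2
      have hgmu := prod_gg_le_mu (μ := fun j => min (k + j) (m - 1)) hTcard
        (fun v _ => by have := hdeg' v; omega)
        (fun j hj => by show (1:ℕ) ≤ min (k + j) (m - 1); omega)
        (fun i j hij hjk => by show min (k + i) (m - 1) ≤ min (k + j) (m - 1); omega)
        hcount
      -- positivity of products
      have hXpos : 0 < ∏ v ∈ T, gg (G'.degree v) :=
        Finset.prod_pos fun v hv => gg_pos (hdpos v hv)
      have hZpos : 0 < ∏ j ∈ Finset.range k, gg (min (k + j) (m - 1)) :=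
        Finset.prod_pos fun j hj => gg_pos (by omega)
      have hkpos : (0 : ℝ) < (k : ℝ) := by exact_mod_cast hk
      -- the six statements
      have hlowIneq : PR (kStar (m+1) k) ≤ PR (addSimplicialVertex G' T) := by
        rw [hPRG, hPRstar]
        have h1 : gg (m-1) ^ k * PR (kStar m k) ≤ (∏ v ∈ T, gg (G'.degree v)) * PR G' :=
          mul_le_mul hlow.1 ih.1.1 (le_of_lt hPRstarpos) (le_of_lt hXpos)
        calc (k : ℝ) * gg (m-1) ^ k * PR (kStar m k)
            = (k : ℝ) * (gg (m-1) ^ k * PR (kStar m k)) := by ring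
          _ ≤ (k : ℝ) * ((∏ v ∈ T, gg (G'.degree v)) * PR G') := by
              exact mul_le_mul_of_nonneg_left h1 (le_of_lt hkpos)
          _ = (k : ℝ) * (∏ v ∈ T, gg (G'.degree v)) * PR G' := by ring
      have hupIneq : PR (addSimplicialVertex G' T) ≤ PR (kPath (m+1) k) := by
        rw [hPRG, hPRpath]
        have h1 : (∏ v ∈ T, gg (G'.degree v)) * PR G'
            ≤ (∏ j ∈ Finset.range k, gg (min (k + j) (m - 1))) * PR (kPath m k) :=
          mul_le_mul hgmu.1 ih.1.2 (le_of_lt hPRG'pos) (le_of_lt hZpos)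
        calc (k : ℝ) * (∏ v ∈ T, gg (G'.degree v)) * PR G'
            = (k : ℝ) * ((∏ v ∈ T, gg (G'.degree v)) * PR G') := by ring
          _ ≤ (k : ℝ) * ((∏ j ∈ Finset.range k, gg (min (k + j) (m - 1))) * PR (kPath m k)) :=
              mul_le_mul_of_nonneg_left h1 (le_of_lt hkpos)
          _ = _ := by ring
      refine ⟨⟨hlowIneq, hupIneq⟩, ⟨?_, ?_⟩, ⟨?_, ?_⟩⟩
      · -- equality with star implies iso
        intro heq
        rw [hPRG, hPRstar] at heq
        have heq2 : (∏ v ∈ T, gg (G'.degree v)) * PR G'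
            = gg (m-1) ^ k * PR (kStar m k) := by
          apply mul_left_cancel₀ hkpos.ne'
          linear_combination heq
        have hx := factor_eq hlow.1 ih.1.1 (pow_pos hggpos k) hPRstarpos heq2
        have hdall : ∀ v ∈ T, G'.degree v = m - 1 := by
          intro v hv
          have := hlow.2 hx.1.symm v hv
          exact (gg_inj (by omega) (hdpos v hv) this).symm
        obtain ⟨e⟩ := ih.2.1.1 hx.2
        have hS'dom : ∀ v ∈ T.image ⇑e, (kStar m k).degree v = m - 1 := by
          intro v hv
          obtain ⟨u, hu, rfl⟩ := Finset.mem_image.1 hv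
          rw [iso_degree e u]
          exact hdall u hu
        have hS'card : (T.image ⇑e).card = k := by
          rw [Finset.card_image_of_injective _ (RelIso.injective e), hTcard]
        obtain ⟨τ, hτ⟩ := star_extremal_clique hk (by omega) (T.image ⇑e) hS'card hS'dom
        have i1 := addS_iso e T
        have i2 := addS_iso τ (T.image ⇑e)
        rw [hτ, addS_kStar (by omega : k ≤ m)] at i2
        exact ⟨i1.trans i2⟩
      · rintro ⟨e⟩
        exact PR_iso_eq e
      · -- equality with path implies iso
        intro heq
        rw [hPRG, hPRpath] at heq
        have heq2 : (∏ j ∈ Finset.range k, gg (min (k + j) (m - 1))) * PR (kPath m k)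
            = (∏ v ∈ T, gg (G'.degree v)) * PR G' := by
          apply mul_left_cancel₀ hkpos.ne'
          linear_combination -heq
        have hx0 := factor_eq hgmu.1 ih.1.2 hXpos hPRG'pos heq2
        have hx : (∏ v ∈ T, gg (G'.degree v))
            = (∏ j ∈ Finset.range k, gg (min (k + j) (m - 1)))
            ∧ PR G' = PR (kPath m k) := ⟨hx0.1.symm, hx0.2.symm⟩
        have hmulti := hgmu.2 hx.1
        obtain ⟨e⟩ := ih.2.2.1 hx.2
        have hS'card : (T.image ⇑e).card = k := by
          rw [Finset.card_image_of_injective _ (RelIso.injective e), hTcard]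
        have hS'cl : (kPath m k).IsClique ↑(T.image ⇑e) := clique_image e hTclique
        have hS'deg : (T.image ⇑e).val.map (fun v => (kPath m k).degree v)
            = (Multiset.range k).map (fun j => min (k + j) (m - 1)) := by
          rw [Finset.image_val_of_injOn ((RelIso.injective e).injOn), Multiset.map_map]
          rw [← hmulti]
          refine Multiset.map_congr rfl fun v hv => ?_
          exact iso_degree e v
        obtain ⟨τ, hτ⟩ := path_extremal_clique hk (by omega) (T.image ⇑e) hS'cl hS'card hS'deg
        have i1 := addS_iso e T
        have i2 := addS_iso τ (T.image ⇑e)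
        rw [hτ, addS_kPath (by omega : k ≤ m)] at i2
        exact ⟨i1.trans i2⟩
      · rintro ⟨e⟩
        exact PR_iso_eq e

lemma Z1_eq_PR_rpow (G : SimpleGraph (Fin n)) (c : ℝ) : Z1 G c = PR G ^ c := by
  unfold Z1 PR
  rw [← Real.finset_prod_rpow _ _ (fun i _ => Nat.cast_nonneg _) c]

lemma rpow_inj_iff {c : ℝ} (hc : 0 < c) {a b : ℝ} (ha : 0 ≤ a) (hb : 0 ≤ b) :
    a ^ c = b ^ c ↔ a = b := by
  constructor
  · intro h
    have h2 := congrArg (fun x : ℝ => x ^ c⁻¹) h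
    rw [← Real.rpow_mul ha, ← Real.rpow_mul hb, mul_inv_cancel₀ hc.ne',
      Real.rpow_one, Real.rpow_one] at h2
    exact h2
  · intro h
    rw [h]

end KT

/-- Theorem 2: for any `k`-tree `G` on `n` vertices and any real `c > 0`,
`∏_{1,c}(S_{k,n-k}) ≤ ∏_{1,c}(G) ≤ ∏_{1,c}(P_n^k)`, with equality on the left iff
`G ≅ S_{k,n-k}` and on the right iff `G ≅ P_n^k`. -/
theorem ktree_zagreb1 (k n : ℕ) (hk : 0 < k) (G : SimpleGraph (Fin n))
    (hG : IsKTree k G) (c : ℝ) (hc : 0 < c) :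
    (Z1 (kStar n k) c ≤ Z1 G c ∧ Z1 G c ≤ Z1 (kPath n k) c) ∧
    (Z1 G c = Z1 (kStar n k) c ↔ Nonempty (G ≃g kStar n k)) ∧
    (Z1 G c = Z1 (kPath n k) c ↔ Nonempty (G ≃g kPath n k)) := by
  obtain ⟨⟨h1, h2⟩, h3, h4⟩ := KT.mainPR hk hG
  refine ⟨⟨?_, ?_⟩, ?_, ?_⟩
  · rw [KT.Z1_eq_PR_rpow, KT.Z1_eq_PR_rpow]
    exact Real.rpow_le_rpow KT.PR_nonneg h1 hc.le
  · rw [KT.Z1_eq_PR_rpow, KT.Z1_eq_PR_rpow]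
    exact Real.rpow_le_rpow KT.PR_nonneg h2 hc.le
  · rw [KT.Z1_eq_PR_rpow, KT.Z1_eq_PR_rpow,
      KT.rpow_inj_iff hc KT.PR_nonneg KT.PR_nonneg]
    exact h3
  · rw [KT.Z1_eq_PR_rpow, KT.Z1_eq_PR_rpow,
      KT.rpow_inj_iff hc KT.PR_nonneg KT.PR_nonneg]
    exact h4
end
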